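/- arXiv:1910.08843 — 3 statements merged into one kernel-verified Lean document; each statement's English description precedes it below -/
import Mathlib

section
/- For every integer n ≥ 3, the symmetric group S_n has a string C-group representation of rank n−1, and every string C-group representation of S_n has rank at most n−1; that is, the string C-rank of S_n equals n−1. -/
/-- A string C-group representation of rank `n` of a group `G`: a family of `n`
involutions generating `G`, satisfying the commuting (string) property and the
intersection property. -/
def IsStringCGroupRep {G : Type*} [Group G] {n : ℕ} (ρ : Fin n → G) : Prop :=
  (∀ i, orderOf (ρ i) = 2) ∧
  Subgroup.closure (Set.range ρ) = ⊤ ∧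
  (∀ i j : Fin n, i.val + 1 < j.val → Commute (ρ i) (ρ j)) ∧
  (∀ I J : Set (Fin n),
    Subgroup.closure (ρ '' I) ⊓ Subgroup.closure (ρ '' J) = Subgroup.closure (ρ '' (I ∩ J)))

open Subgroup

section Sopfr

/-- Sum of prime factors with multiplicity. -/
def sopfr (n : ℕ) : ℕ := (n.primeFactorsList).sum

lemma sopfr_one : sopfr 1 = 0 := by simp [sopfr]

lemma sopfr_mul {a b : ℕ} (ha : a ≠ 0) (hb : b ≠ 0) :
    sopfr (a * b) = sopfr a + sopfr b := by
  unfold sopfr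
  rw [← List.sum_append]
  exact List.Perm.sum_eq (Nat.perm_primeFactorsList_mul ha hb)

lemma list_sum_le_prod (l : List ℕ) (h : ∀ x ∈ l, 2 ≤ x) : l.sum ≤ l.prod := by
  induction l with
  | nil => simp
  | cons x t ih =>
    have hx : 2 ≤ x := h x (by simp)
    have ht : ∀ y ∈ t, 2 ≤ y := fun y hy => h y (by simp [hy])
    rcases t with - | ⟨y, t'⟩
    · simp
    · have h2 : 2 ≤ (y :: t').prod := by
        calc 2 ≤ y := ht y (by simp)
        _ ≤ (y :: t').prod := by
          rw [List.prod_cons]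
          exact Nat.le_mul_of_pos_right y (List.prod_pos (fun z hz => lt_of_lt_of_le (by norm_num) (ht z (by simp [hz]))))
      rw [List.sum_cons, List.prod_cons]
      have := ih ht
      nlinarith [ih ht]

lemma sopfr_le {n : ℕ} (hn : n ≠ 0) : sopfr n ≤ n := by
  conv_rhs => rw [← Nat.prod_primeFactorsList hn]
  exact list_sum_le_prod _ (fun x hx => (Nat.prime_of_mem_primeFactorsList hx).two_le)

lemma sopfr_two : sopfr 2 = 2 := by
  simp [sopfr, Nat.primeFactorsList_prime Nat.prime_two]

lemma two_le_sopfr {n : ℕ} (hn : 2 ≤ n) : 2 ≤ sopfr n := by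
  obtain ⟨p, hp, hpd⟩ := Nat.exists_prime_and_dvd (by omega : n ≠ 1)
  have hmem : p ∈ n.primeFactorsList := (Nat.mem_primeFactorsList (by omega)).2 ⟨hp, hpd⟩
  calc 2 ≤ p := hp.two_le
  _ ≤ sopfr n := List.single_le_sum (fun x _ => Nat.zero_le x) p hmem

lemma three_le_sopfr {n : ℕ} (hn : 3 ≤ n) : 3 ≤ sopfr n := by
  rcases Nat.even_or_odd n with he | ho
  · obtain ⟨m, hm⟩ := he
    have hm2 : 2 ≤ m := by omega
    have : n = 2 * m := by omega
    rw [this, sopfr_mul (by norm_num) (by omega)]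
    have : sopfr 2 = 2 := by simp [sopfr, Nat.primeFactorsList_prime Nat.prime_two]
    have := two_le_sopfr hm2
    omega
  · obtain ⟨p, hp, hpd⟩ := Nat.exists_prime_and_dvd (by omega : n ≠ 1)
    have hmem : p ∈ n.primeFactorsList := (Nat.mem_primeFactorsList (by omega)).2 ⟨hp, hpd⟩
    have hpo : p ≠ 2 := by
      rintro rfl
      exact (Nat.not_even_iff_odd.mpr ho) (even_iff_two_dvd.mpr hpd)
    have : 3 ≤ p := by have := hp.two_le; omega
    calc 3 ≤ p := this
    _ ≤ sopfr n := List.single_le_sum (fun x _ => Nat.zero_le x) p hmem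

end Sopfr

section KeyLemma
lemma abelian_faithful_bound {α : Type} [Fintype α] :
    ∀ (N : ℕ) (G : Type) (_ : Group G) (_ : Finite G) (_ : MulAction G α),
      Nat.card G = N →
      (∀ a b : G, Commute a b) →
      (∀ g : G, (∀ x : α, g • x = x) → g = 1) →
      sopfr (Nat.card G) ≤ Set.ncard {x : α | ∃ g : G, g • x ≠ x} := by
  intro N
  induction N using Nat.strong_induction_on with
  | _ N IH =>
    intro G _ _ _ hcard hcomm hfaith
    rcases eq_or_ne (Nat.card G) 1 with h1 | h1
    · rw [h1, sopfr_one]; exact Nat.zero_le _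
    · have hex : ∃ g : G, g ≠ 1 := by
        by_contra hcon
        push_neg at hcon
        exact h1 (Nat.card_eq_one_iff_unique.2 ⟨⟨fun a b => by rw [hcon a, hcon b]⟩, ⟨1⟩⟩)
      obtain ⟨g, hg⟩ := hex
      have : ¬ (∀ x : α, g • x = x) := fun h => hg (hfaith g h)
      push_neg at this
      obtain ⟨a, ha⟩ := this
      set S := MulAction.stabilizer G a with hS
      set O := MulAction.orbit G a with hO
      -- orbit-stabilizer
      have hOS : Nat.card O * Nat.card S = Nat.card G := by
        have h1 : Nat.card O = Nat.card (G ⧸ S) :=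
          Nat.card_congr (MulAction.orbitEquivQuotientStabilizer G a)
        rw [h1, ← Subgroup.index_eq_card, Subgroup.index_mul_card]
      have haO : a ∈ O := MulAction.mem_orbit_self a
      have : Nonempty O := ⟨⟨a, haO⟩⟩
      have hSpos : 0 < Nat.card S := Nat.card_pos
      have hOpos : 0 < Nat.card O := Nat.card_pos
      have hgaO : g • a ∈ O := MulAction.mem_orbit a g
      have hOn : (O : Set α).ncard = Nat.card O := (Nat.card_coe_set_eq O).symm
      have hO2 : 2 ≤ Nat.card O := by
        rw [← hOn]
        have : 1 < (O : Set α).ncard := by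
          rw [Set.one_lt_ncard_iff O.toFinite]
          exact ⟨g • a, a, hgaO, haO, ha⟩
        omega
      have hSlt : Nat.card S < N := by
        rw [← hcard, ← hOS]
        calc Nat.card S = 1 * Nat.card S := (one_mul _).symm
        _ < Nat.card O * Nat.card S := by
          exact Nat.mul_lt_mul_of_lt_of_le (by omega) le_rfl hSpos
      -- every point of the orbit is moved by g
      have hOmoved : (O : Set α) ⊆ {x : α | ∃ g : G, g • x ≠ x} := by
        rintro x ⟨h, rfl⟩
        refine ⟨g, ?_⟩
        have : g • h • a = h • g • a := by
          rw [smul_smul, smul_smul, (hcomm g h).eq]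
        rw [this]
        intro hcontra
        exact ha (MulAction.injective h hcontra)
      -- stabilizer elements fix the whole orbit
      have hSfix : ∀ (s : S) (x : α), x ∈ O → s • x = x := by
        rintro s x ⟨h, rfl⟩
        have : (s : G) • h • a = h • (s : G) • a := by
          rw [smul_smul, smul_smul, (hcomm (s : G) h).eq]
        have hs : (s : G) • a = a := s.2
        calc s • (h • a) = (s : G) • h • a := rfl
        _ = h • (s : G) • a := this
        _ = h • a := by rw [hs]
      -- apply induction hypothesis to S
      have hIH := IH (Nat.card S) hSlt S inferInstance inferInstance inferInstance rfl
        (fun x y => Subtype.ext (hcomm x y))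
        (fun s hs => by
          apply Subtype.ext
          apply hfaith
          intro x
          exact hs x)
      set MS := {x : α | ∃ s : S, s • x ≠ x} with hMS
      have hsub : MS ⊆ {x : α | ∃ g : G, g • x ≠ x} := by
        rintro x ⟨s, hsx⟩
        exact ⟨(s : G), hsx⟩
      have hdisj : Disjoint (O : Set α) MS := by
        rw [Set.disjoint_left]
        rintro x hxO ⟨s, hsx⟩
        exact hsx (hSfix s x hxO)
      calc sopfr (Nat.card G) = sopfr (Nat.card O * Nat.card S) := by rw [hOS]
      _ = sopfr (Nat.card O) + sopfr (Nat.card S) := sopfr_mul (by omega) (by omega)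
      _ ≤ Nat.card O + Set.ncard MS := Nat.add_le_add (sopfr_le (by omega)) hIH
      _ = (O : Set α).ncard + Set.ncard MS := by rw [hOn]
      _ = ((O : Set α) ∪ MS).ncard := (Set.ncard_union_eq hdisj O.toFinite MS.toFinite).symm
      _ ≤ Set.ncard {x : α | ∃ g : G, g • x ≠ x} := by
        apply Set.ncard_le_ncard _ (Set.toFinite _)
        exact Set.union_subset hOmoved hsub

end KeyLemma

section GroupLemmas
variable {G : Type*} [Group G]
/-- closure of a set of pairwise commuting elements is commutative. -/
lemma closure_comm {S : Set G} (hS : ∀ a ∈ S, ∀ b ∈ S, Commute a b) :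
    ∀ x ∈ closure S, ∀ y ∈ closure S, Commute x y := by
  have step1 : ∀ s ∈ S, ∀ y ∈ closure S, Commute s y := by
    intro s hs y hy
    have : closure S ≤ Subgroup.centralizer {s} := by
      rw [closure_le]
      intro b hb
      rw [SetLike.mem_coe, Subgroup.mem_centralizer_iff]
      intro h hh
      rw [Set.mem_singleton_iff] at hh
      rw [hh]
      exact (hS s hs b hb).eq
    have := this hy
    rw [Subgroup.mem_centralizer_iff] at this
    exact this s rfl
  intro x hx y hy
  have : closure S ≤ Subgroup.centralizer {y} := by
    rw [closure_le]
    intro s hs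
    rw [SetLike.mem_coe, Subgroup.mem_centralizer_iff]
    intro h hh
    rw [Set.mem_singleton_iff] at hh
    rw [hh]
    exact ((step1 s hs y hy).symm).eq
  have := this hx
  rw [Subgroup.mem_centralizer_iff] at this
  exact Commute.symm (this y rfl)

/-- Cardinality of the join of two elementwise-commuting subgroups with
trivial intersection. -/
lemma card_sup_of_commute {A B : Subgroup G}
    (hcomm : ∀ a ∈ A, ∀ b ∈ B, Commute a b) (hdisj : A ⊓ B = ⊥) :
    Nat.card ↥(A ⊔ B) = Nat.card A * Nat.card B := by
  have comm' : ∀ (m : A) (n : B), Commute (A.subtype m) (B.subtype n) :=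
    fun m n => hcomm m m.2 n n.2
  set f : A × B →* G := MonoidHom.noncommCoprod A.subtype B.subtype comm' with hf
  have hinj : Function.Injective f := by
    rw [← MonoidHom.ker_eq_bot_iff]
    rw [eq_bot_iff]
    rintro ⟨a, b⟩ hab
    rw [MonoidHom.mem_ker] at hab
    have hab' : (a : G) * (b : G) = 1 := hab
    have ha : (a : G) ∈ A ⊓ B := by
      constructor
      · exact a.2
      · have : (a : G) = (b : G)⁻¹ := by
          rw [eq_inv_iff_mul_eq_one]; exact hab'
        rw [this]
        exact B.inv_mem b.2
    rw [hdisj, Subgroup.mem_bot] at ha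
    have hb : (b : G) = 1 := by
      have := hab'
      rw [ha, one_mul] at this
      exact this
    rw [Subgroup.mem_bot]
    ext <;> simp [ha, hb]
  have hrange : f.range = A ⊔ B := by
    apply le_antisymm
    · rintro x ⟨⟨a, b⟩, rfl⟩
      have : f (a, b) = (a : G) * (b : G) := rfl
      rw [this]
      exact mul_mem (SetLike.le_def.1 le_sup_left a.2) (SetLike.le_def.1 le_sup_right b.2)
    · rw [sup_le_iff]
      constructor
      · intro a ha
        exact ⟨(⟨a, ha⟩, 1), by simp [hf, MonoidHom.noncommCoprod]⟩
      · intro b hb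
        exact ⟨(1, ⟨b, hb⟩), by simp [hf, MonoidHom.noncommCoprod]⟩
  calc Nat.card ↥(A ⊔ B) = Nat.card f.range := by rw [hrange]
  _ = Nat.card (A × B) := (Nat.card_congr (MonoidHom.ofInjective hinj).toEquiv).symm
  _ = Nat.card A * Nat.card B := Nat.card_prod _ _

variable {r : ℕ} {ι : Type*} (ρ : ι → G)

/-- The card of the closure of a list of "tagged" elements with pairwise
disjoint index supports, under the intersection property. -/
lemma card_closure_tagged
    (hint : ∀ I J : Set ι,
      closure (ρ '' I) ⊓ closure (ρ '' J) = closure (ρ '' (I ∩ J))) :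
    ∀ (l : List (G × Set ι)),
      (∀ p ∈ l, p.1 ∈ closure (ρ '' p.2)) →
      l.Pairwise (fun p q => Commute p.1 q.1 ∧ Disjoint p.2 q.2) →
      Nat.card (closure {y : G | y ∈ l.map Prod.fst}) =
        (l.map (fun p => orderOf p.1)).prod := by
  intro l
  induction l with
  | nil =>
    intro _ _
    simp only [List.map_nil, List.prod_nil]
    have : {y : G | y ∈ ([] : List G)} = (∅ : Set G) := by simp
    rw [this, Subgroup.closure_empty]
    simp
  | cons p t ih =>
    intro hmem hpair
    rw [List.pairwise_cons] at hpair
    obtain ⟨hhead, htail⟩ := hpair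
    have hset : {y : G | y ∈ (p :: t).map Prod.fst} =
        {p.1} ∪ {y : G | y ∈ t.map Prod.fst} := by
      ext y; simp [List.mem_cons]
    rw [hset, Subgroup.closure_union, ← zpowers_eq_closure]
    -- tail closure is inside closure of the union of supports
    set U : Set ι := {i | ∃ q ∈ t, i ∈ q.2} with hU
    have htaille : closure {y : G | y ∈ t.map Prod.fst} ≤ closure (ρ '' U) := by
      rw [closure_le]
      intro y hy
      simp only [Set.mem_setOf_eq, List.mem_map] at hy
      obtain ⟨q, hq, rfl⟩ := hy
      have : q.1 ∈ closure (ρ '' q.2) := hmem q (List.mem_cons_of_mem p hq)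
      have hmono : closure (ρ '' q.2) ≤ closure (ρ '' U) := by
        apply Subgroup.closure_mono
        apply Set.image_mono
        intro i hi
        exact ⟨q, hq, hi⟩
      exact hmono this
    have hdisjU : p.2 ∩ U = ∅ := by
      ext i
      simp only [Set.mem_inter_iff, Set.mem_empty_iff_false, iff_false, not_and]
      rintro hip ⟨q, hq, hiq⟩
      exact Set.disjoint_left.1 (hhead q hq).2 hip hiq
    have hbot : zpowers p.1 ⊓ closure {y : G | y ∈ t.map Prod.fst} = ⊥ := by
      rw [eq_bot_iff]
      have h1 : zpowers p.1 ≤ closure (ρ '' p.2) := by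
        rw [zpowers_eq_closure, closure_le]
        intro y hy
        rw [Set.mem_singleton_iff] at hy
        rw [hy]
        exact hmem p List.mem_cons_self
      calc zpowers p.1 ⊓ closure {y : G | y ∈ t.map Prod.fst}
          ≤ closure (ρ '' p.2) ⊓ closure (ρ '' U) := inf_le_inf h1 htaille
      _ = closure (ρ '' (p.2 ∩ U)) := hint _ _
      _ ≤ ⊥ := by rw [hdisjU, Set.image_empty, Subgroup.closure_empty]
    have hcommAB : ∀ a ∈ zpowers p.1, ∀ b ∈ closure {y : G | y ∈ t.map Prod.fst},
        Commute a b := by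
      intro a ha b hb
      have hSfull : ∀ x ∈ {y : G | y ∈ (p :: t).map Prod.fst},
          ∀ y ∈ {y : G | y ∈ (p :: t).map Prod.fst}, Commute x y := by
        intro x hx y hy
        simp only [Set.mem_setOf_eq, List.mem_map] at hx hy
        obtain ⟨q1, hq1, rfl⟩ := hx
        obtain ⟨q2, hq2, rfl⟩ := hy
        rcases List.mem_cons.1 hq1 with rfl | hq1t <;>
          rcases List.mem_cons.1 hq2 with h2 | hq2t
        · rw [h2]
        · exact (hhead q2 hq2t).1
        · rw [h2]
          exact ((hhead q1 hq1t).1).symm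
        · -- both in tail
          rcases eq_or_ne q1 q2 with rfl | hne
          · rfl
          · -- use pairwise on tail; q1 q2 both in t, in some order
            have hsym : Symmetric (fun p q : G × Set ι => Commute p.1 q.1 ∧ Disjoint p.2 q.2) :=
              fun a b hab => ⟨hab.1.symm, hab.2.symm⟩
            haveI : Std.Symm (fun p q : G × Set ι => Commute p.1 q.1 ∧ Disjoint p.2 q.2) :=
              ⟨fun a b h => hsym h⟩
            exact (List.Pairwise.forall htail hq1t hq2t hne).1
      have hx' : a ∈ closure {y : G | y ∈ (p :: t).map Prod.fst} := by
        rw [hset, Subgroup.closure_union, ← zpowers_eq_closure]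
        exact SetLike.le_def.1 le_sup_left ha
      have hy' : b ∈ closure {y : G | y ∈ (p :: t).map Prod.fst} := by
        rw [hset, Subgroup.closure_union]
        exact SetLike.le_def.1 le_sup_right hb
      exact closure_comm hSfull a hx' b hy'
    rw [card_sup_of_commute hcommAB hbot, Nat.card_zpowers,
      ih (fun q hq => hmem q (List.mem_cons_of_mem p hq)) htail]
    simp

end GroupLemmas

section Bound
lemma sopfr_list_prod : ∀ l : List ℕ, (∀ x ∈ l, x ≠ 0) →
    sopfr l.prod = (l.map sopfr).sum := by
  intro l
  induction l with
  | nil => intro _; simpa using sopfr_one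
  | cons x t ih =>
    intro h
    rw [List.prod_cons, List.map_cons, List.sum_cons,
      sopfr_mul (h x (by simp)) (by
        apply List.prod_ne_zero
        intro hc
        exact (h 0 (by simp [List.mem_of_mem_filter, hc] : (0:ℕ) ∈ x :: t)) rfl),
      ih (fun y hy => h y (by simp [hy]))]

lemma tagged_bound {n : ℕ} {ι : Type} (ρ : ι → Equiv.Perm (Fin n))
    (hint : ∀ I J : Set ι,
      closure (ρ '' I) ⊓ closure (ρ '' J) = closure (ρ '' (I ∩ J)))
    (l : List (Equiv.Perm (Fin n) × Set ι))
    (hmem : ∀ p ∈ l, p.1 ∈ closure (ρ '' p.2))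
    (hpair : l.Pairwise (fun p q => Commute p.1 q.1 ∧ Disjoint p.2 q.2)) :
    (l.map (fun p => sopfr (orderOf p.1))).sum ≤ n := by
  set M := closure {y : Equiv.Perm (Fin n) | y ∈ l.map Prod.fst} with hM
  -- the closure is abelian
  have hSfull : ∀ x ∈ {y : Equiv.Perm (Fin n) | y ∈ l.map Prod.fst},
      ∀ y ∈ {y : Equiv.Perm (Fin n) | y ∈ l.map Prod.fst}, Commute x y := by
    intro x hx y hy
    simp only [Set.mem_setOf_eq, List.mem_map] at hx hy
    obtain ⟨q1, hq1, rfl⟩ := hx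
    obtain ⟨q2, hq2, rfl⟩ := hy
    rcases eq_or_ne q1 q2 with rfl | hne
    · rfl
    · have hsym : Symmetric (fun p q : Equiv.Perm (Fin n) × Set ι =>
          Commute p.1 q.1 ∧ Disjoint p.2 q.2) :=
        fun a b hab => ⟨hab.1.symm, hab.2.symm⟩
      haveI : Std.Symm (fun p q : Equiv.Perm (Fin n) × Set ι =>
          Commute p.1 q.1 ∧ Disjoint p.2 q.2) := ⟨fun a b h => hsym h⟩
      exact (List.Pairwise.forall hpair hq1 hq2 hne).1
  have habel : ∀ a b : ↥M, Commute a b := by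
    intro a b
    have := closure_comm hSfull a a.2 b b.2
    exact Subtype.ext this
  have hfaith : ∀ g : ↥M, (∀ x : Fin n, g • x = x) → g = 1 := by
    intro g hg
    apply Subtype.ext
    apply Equiv.ext
    intro x
    exact hg x
  have hkey := abelian_faithful_bound (Nat.card ↥M) ↥M inferInstance inferInstance
    inferInstance rfl habel hfaith
  have hcard := card_closure_tagged ρ hint l hmem hpair
  have horder : ∀ x ∈ l.map (fun p => orderOf p.1), x ≠ 0 := by
    intro x hx
    simp only [List.mem_map] at hx
    obtain ⟨q, hq, rfl⟩ := hx
    exact (orderOf_pos q.1).ne'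
  calc (l.map (fun p => sopfr (orderOf p.1))).sum
      = ((l.map (fun p => orderOf p.1)).map sopfr).sum := by
        rw [List.map_map]; rfl
  _ = sopfr ((l.map (fun p => orderOf p.1)).prod) := (sopfr_list_prod _ horder).symm
  _ = sopfr (Nat.card ↥M) := by rw [hcard]
  _ ≤ Set.ncard {x : Fin n | ∃ g : ↥M, g • x ≠ x} := hkey
  _ ≤ Set.ncard (Set.univ : Set (Fin n)) :=
      Set.ncard_le_ncard (Set.subset_univ _) (Set.toFinite _)
  _ = n := by rw [Set.ncard_univ, Nat.card_eq_fintype_card, Fintype.card_fin]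

end Bound

section Upper
lemma sum_map_range_const {m c : ℕ} {f : ℕ → ℕ} (h : ∀ j < m, f j = c) :
    ((List.range m).map f).sum = m * c := by
  induction m with
  | zero => simp
  | succ k ih =>
    rw [List.range_succ, List.map_append, List.sum_append,
      ih (fun j hj => h j (by omega))]
    simp [h k (by omega)]
    ring

theorem upper_bound {n : ℕ} (hn : 3 ≤ n) (r : ℕ) (ρ : Fin r → Equiv.Perm (Fin n))
    (h : IsStringCGroupRep ρ) : r ≤ n - 1 := by
  obtain ⟨hord, -, hcomm, hint⟩ := h
  by_contra hcon
  have hr : n ≤ r := by omega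
  set σ : ℕ → Equiv.Perm (Fin n) := fun k => if h : k < r then ρ ⟨k, h⟩ else 1 with hσ
  set S : ℕ → Set (Fin r) := fun k => {i : Fin r | (i : ℕ) = k} with hS
  have hσval : ∀ k (h : k < r), σ k = ρ ⟨k, h⟩ := by
    intro k h; simp [hσ, h]
  have hmem1 : ∀ k (h : k < r), σ k ∈ closure (ρ '' S k) := by
    intro k h
    rw [hσval k h]
    exact subset_closure ⟨⟨k, h⟩, rfl, rfl⟩
  have hord1 : ∀ k, k < r → orderOf (σ k) = 2 := by
    intro k h; rw [hσval k h]; exact hord _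
  have hcomm1 : ∀ k k', k + 1 < k' → k' < r → Commute (σ k) (σ k') := by
    intro k k' hlt hk'
    rw [hσval k (by omega), hσval k' hk']
    exact hcomm _ _ (by simpa using hlt)
  have hdisjS : ∀ k k', k ≠ k' → Disjoint (S k) (S k') := by
    intro k k' hne
    rw [Set.disjoint_left]
    intro i hik hik'
    simp only [hS, Set.mem_setOf_eq] at hik hik'
    omega
  rcases Nat.even_or_odd n with he | ho
  · -- n even
    obtain ⟨m, hm⟩ := he
    have h4 : 4 ≤ n := by omega
    set t : List (Equiv.Perm (Fin n) × Set (Fin r)) :=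
      (List.range ((n - 2) / 2)).map (fun j => (σ (3 + 2 * j), S (3 + 2 * j))) with ht
    have htmem : ∀ p ∈ t, p.1 ∈ closure (ρ '' p.2) := by
      intro p hp
      rw [ht, List.mem_map] at hp
      obtain ⟨j, hj, rfl⟩ := hp
      rw [List.mem_range] at hj
      exact hmem1 (3 + 2 * j) (by omega)
    have htpair : t.Pairwise (fun p q => Commute p.1 q.1 ∧ Disjoint p.2 q.2) := by
      rw [ht, List.pairwise_map]
      apply List.Pairwise.imp_of_mem ?_ List.pairwise_lt_range
      intro a b ha hb hab
      rw [List.mem_range] at ha hb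
      exact ⟨hcomm1 (3 + 2 * a) (3 + 2 * b) (by omega) (by omega),
        hdisjS (3 + 2 * a) (3 + 2 * b) (by omega)⟩
    have htsum : (t.map (fun p => sopfr (orderOf p.1))).sum = n - 2 := by
      rw [ht, List.map_map]
      rw [sum_map_range_const (c := 2) (f := _)]
      · omega
      · intro j hj
        simp only [Function.comp]
        rw [hord1 (3 + 2 * j) (by omega)]
        exact sopfr_two
    have hheadtail : ∀ k, k < 2 → ∀ q ∈ t, Commute (σ k) q.1 ∧ Disjoint (S k) q.2 := by
      intro k hk q hq
      rw [ht, List.mem_map] at hq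
      obtain ⟨j, hj, rfl⟩ := hq
      rw [List.mem_range] at hj
      exact ⟨hcomm1 _ _ (by omega) (by omega), hdisjS _ _ (by omega)⟩
    by_cases hc01 : Commute (σ 0) (σ 1)
    · -- two singleton entries
      set l := (σ 0, S 0) :: (σ 1, S 1) :: t with hl
      have := tagged_bound ρ hint l ?_ ?_
      · rw [hl] at this
        simp only [List.map_cons, List.sum_cons] at this
        rw [htsum, hord1 0 (by omega), hord1 1 (by omega), sopfr_two] at this
        omega
      · rintro p hp
        rcases List.mem_cons.1 hp with rfl | hp
        · exact hmem1 0 (by omega)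
        rcases List.mem_cons.1 hp with rfl | hp
        · exact hmem1 1 (by omega)
        · exact htmem p hp
      · rw [hl]
        refine List.Pairwise.cons ?_ (List.Pairwise.cons ?_ htpair)
        · rintro q hq
          rcases List.mem_cons.1 hq with rfl | hq
          · exact ⟨hc01, hdisjS 0 1 (by omega)⟩
          · exact hheadtail 0 (by omega) q hq
        · intro q hq
          exact hheadtail 1 (by omega) q hq
    · -- product entry
      have hne01 : σ 0 ≠ σ 1 := fun hcontra => hc01 (by rw [hcontra])
      have hc : σ 0 * σ 1 ≠ 1 := by
        intro hcontra
        apply hne01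
        have h12 : σ 1 * σ 1 = 1 := by
          have := pow_orderOf_eq_one (σ 1)
          rwa [hord1 1 (by omega), pow_two] at this
        calc σ 0 = (σ 0 * σ 1) * σ 1 := by
              rw [mul_assoc, h12, mul_one]
        _ = σ 1 := by rw [hcontra, one_mul]
      have hc2 : (σ 0 * σ 1) * (σ 0 * σ 1) ≠ 1 := by
        intro hcontra
        apply hc01
        have h02 : σ 0 * σ 0 = 1 := by
          have := pow_orderOf_eq_one (σ 0)
          rwa [hord1 0 (by omega), pow_two] at this
        have h12 : σ 1 * σ 1 = 1 := by
          have := pow_orderOf_eq_one (σ 1)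
          rwa [hord1 1 (by omega), pow_two] at this
        show σ 0 * σ 1 = σ 1 * σ 0
        calc σ 0 * σ 1 = σ 0 * ((σ 0 * σ 1) * (σ 0 * σ 1)) * σ 1 := by
              rw [hcontra, mul_one]
        _ = (σ 0 * σ 0) * (σ 1 * σ 0) * (σ 1 * σ 1) := by
              group
        _ = σ 1 * σ 0 := by rw [h02, h12, one_mul, mul_one]
      have hord3 : 3 ≤ orderOf (σ 0 * σ 1) := by
        have h0 : orderOf (σ 0 * σ 1) ≠ 0 := (orderOf_pos _).ne'
        have h1 : orderOf (σ 0 * σ 1) ≠ 1 := by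
          intro h1'
          exact hc (orderOf_eq_one_iff.mp h1')
        have h2 : orderOf (σ 0 * σ 1) ≠ 2 := by
          intro hcontra
          apply hc2
          have := pow_orderOf_eq_one (σ 0 * σ 1)
          rwa [hcontra, pow_two] at this
        omega
      set l := (σ 0 * σ 1, S 0 ∪ S 1) :: t with hl
      have := tagged_bound ρ hint l ?_ ?_
      · rw [hl] at this
        simp only [List.map_cons, List.sum_cons] at this
        rw [htsum] at this
        have := three_le_sopfr hord3
        omega
      · rintro p hp
        rcases List.mem_cons.1 hp with rfl | hp
        · refine mul_mem ?_ ?_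
          · exact closure_mono (Set.image_mono Set.subset_union_left) (hmem1 0 (by omega))
          · exact closure_mono (Set.image_mono Set.subset_union_right) (hmem1 1 (by omega))
        · exact htmem p hp
      · rw [hl]
        refine List.Pairwise.cons ?_ htpair
        rintro q hq
        obtain ⟨hcq0, hdq0⟩ := hheadtail 0 (by omega) q hq
        obtain ⟨hcq1, hdq1⟩ := hheadtail 1 (by omega) q hq
        exact ⟨Commute.mul_left hcq0 hcq1, Set.disjoint_union_left.mpr ⟨hdq0, hdq1⟩⟩
  · -- n odd
    obtain ⟨m, hm⟩ := ho
    set l : List (Equiv.Perm (Fin n) × Set (Fin r)) :=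
      (List.range ((n + 1) / 2)).map (fun j => (σ (2 * j), S (2 * j))) with hl
    have := tagged_bound ρ hint l ?_ ?_
    · rw [hl, List.map_map] at this
      rw [sum_map_range_const (c := 2) (f := _)] at this
      · omega
      · intro j hj
        simp only [Function.comp]
        rw [hord1 (2 * j) (by omega)]
        exact sopfr_two
    · intro p hp
      rw [hl, List.mem_map] at hp
      obtain ⟨j, hj, rfl⟩ := hp
      rw [List.mem_range] at hj
      exact hmem1 (2 * j) (by omega)
    · rw [hl, List.pairwise_map]
      apply List.Pairwise.imp_of_mem ?_ List.pairwise_lt_range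
      intro a b ha hb hab
      rw [List.mem_range] at ha hb
      exact ⟨hcomm1 _ _ (by omega) (by omega), hdisjS _ _ (by omega)⟩

end Upper

section Existence
/-- the adjacent transpositions -/
def sgen (n : ℕ) (i : Fin (n - 1)) : Equiv.Perm (Fin n) :=
  Equiv.swap ⟨i.val, by have := i.isLt; omega⟩ ⟨i.val + 1, by have := i.isLt; omega⟩

/-- the "Young subgroup" of permutations preserving all initial segments with
cut points outside `S`. -/
def YSub (n : ℕ) (S : Set (Fin (n - 1))) : Subgroup (Equiv.Perm (Fin n)) where
  carrier := {π | ∀ j : Fin (n - 1), j ∉ S → ∀ x : Fin n, x.val ≤ j.val → (π x).val ≤ j.val}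
  one_mem' := by
    intro j hj x hx
    simpa using hx
  mul_mem' := by
    intro a b ha hb j hj x hx
    rw [Equiv.Perm.mul_apply]
    exact ha j hj _ (hb j hj x hx)
  inv_mem' := by
    classical
    intro π hπ j hj x hx
    set D : Finset (Fin n) := Finset.univ.filter (fun y => y.val ≤ j.val) with hD
    have hmaps : D.image π ⊆ D := by
      intro z hz
      rw [Finset.mem_image] at hz
      obtain ⟨y, hy, rfl⟩ := hz
      rw [hD, Finset.mem_filter] at hy ⊢
      exact ⟨Finset.mem_univ _, hπ j hj y hy.2⟩
    have hcard : (D.image π).card = D.card := Finset.card_image_of_injective D π.injective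
    have heq : D.image π = D := Finset.eq_of_subset_of_card_le hmaps (le_of_eq hcard.symm)
    have hxD : x ∈ D := by rw [hD, Finset.mem_filter]; exact ⟨Finset.mem_univ _, hx⟩
    rw [← heq, Finset.mem_image] at hxD
    obtain ⟨y, hyD, hyx⟩ := hxD
    have : π⁻¹ x = y := by rw [← hyx]; simp
    rw [this]
    rw [hD, Finset.mem_filter] at hyD
    exact hyD.2

lemma mem_YSub {n : ℕ} {S : Set (Fin (n - 1))} {π : Equiv.Perm (Fin n)} :
    π ∈ YSub n S ↔
      ∀ j : Fin (n - 1), j ∉ S → ∀ x : Fin n, x.val ≤ j.val → (π x).val ≤ j.val :=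
  Iff.rfl

lemma sgen_mem_YSub {n : ℕ} {S : Set (Fin (n - 1))} {i : Fin (n - 1)}
    (h : ∀ j : Fin (n - 1), j ∉ S → j ≠ i) : sgen n i ∈ YSub n S := by
  rw [mem_YSub]
  intro j hj x hx
  have hji : j.val ≠ i.val := fun hc => (h j hj) (Fin.ext hc)
  have hiv : i.val < n - 1 := i.isLt
  rcases eq_or_ne x ⟨i.val, by omega⟩ with hxu | hxu
  · rw [hxu] at hx ⊢
    rw [sgen, Equiv.swap_apply_left]
    have hx' : i.val ≤ j.val := hx
    show i.val + 1 ≤ j.val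
    omega
  · rcases eq_or_ne x ⟨i.val + 1, by omega⟩ with hxv | hxv
    · rw [hxv] at hx ⊢
      rw [sgen, Equiv.swap_apply_right]
      have hx' : i.val + 1 ≤ j.val := hx
      show i.val ≤ j.val
      omega
    · rw [sgen, Equiv.swap_apply_of_ne_of_ne hxu hxv]
      exact hx

/-- number of inversions -/
noncomputable def Nv {n : ℕ} (π : Equiv.Perm (Fin n)) : ℕ :=
  (Finset.univ.filter (fun p : Fin n × Fin n => p.1 < p.2 ∧ π p.2 < π p.1)).card

lemma le_apply_of_strictMono {n : ℕ} (f : Equiv.Perm (Fin n)) (hf : StrictMono ⇑f)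
    (x : Fin n) : x ≤ f x := by
  classical
  have hsub : (Finset.Iio x).image f ⊆ Finset.Iio (f x) := by
    intro z hz
    rw [Finset.mem_image] at hz
    obtain ⟨y, hy, rfl⟩ := hz
    rw [Finset.mem_Iio] at hy ⊢
    exact hf hy
  have h1 : ((Finset.Iio x).image f).card = x.val := by
    rw [Finset.card_image_of_injective _ f.injective, Fin.card_Iio]
  have h2 := Finset.card_le_card hsub
  rw [h1, Fin.card_Iio] at h2
  exact h2

lemma eq_one_of_strictMono {n : ℕ} (f : Equiv.Perm (Fin n)) (hf : StrictMono ⇑f) :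
    f = 1 := by
  have hinv : StrictMono ⇑f⁻¹ := by
    intro a b hab
    rcases lt_trichotomy (f⁻¹ a) (f⁻¹ b) with h | h | h
    · exact h
    · exfalso
      have : a = b := by
        have := congrArg f h
        simpa using this
      exact absurd this (ne_of_lt hab)
    · exfalso
      have := hf h
      simp only [Equiv.Perm.inv_def, Equiv.apply_symm_apply] at this
      exact absurd hab (not_lt_of_gt this)
  apply Equiv.ext
  intro x
  have h1 : x ≤ f x := le_apply_of_strictMono f hf x
  have h2 : f x ≤ x := by
    have := le_apply_of_strictMono f⁻¹ hinv (f x)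
    simpa using this
  exact le_antisymm h2 h1

lemma strictMono_of_adj {n : ℕ} (π : Equiv.Perm (Fin n))
    (h : ∀ k (hk : k + 1 < n), π ⟨k, by omega⟩ < π ⟨k + 1, hk⟩) : StrictMono ⇑π := by
  have key : ∀ d (x : Fin n) (hd : x.val + d + 1 < n), π x < π ⟨x.val + d + 1, hd⟩ := by
    intro d
    induction d with
    | zero =>
      intro x hd
      have h0 := h x.val (by omega)
      have e1 : (⟨x.val, by omega⟩ : Fin n) = x := Fin.ext rfl
      have e2 : (⟨x.val + 1, by omega⟩ : Fin n) = ⟨x.val + 0 + 1, hd⟩ := by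
        apply Fin.ext
        show x.val + 1 = x.val + 0 + 1
        omega
      rwa [e1, e2] at h0
    | succ d ih =>
      intro x hd
      have h1 := ih x (by omega)
      have h2 := h (x.val + d + 1) (by omega)
      have e : (⟨x.val + d + 1 + 1, by omega⟩ : Fin n) = ⟨x.val + (d + 1) + 1, hd⟩ := by
        apply Fin.ext
        show x.val + d + 1 + 1 = x.val + (d + 1) + 1
        omega
      rw [e] at h2
      exact lt_trans h1 h2
  intro x y hxy
  have hxy' : x.val < y.val := hxy
  have hy : y = ⟨x.val + (y.val - x.val - 1) + 1, by have := y.isLt; omega⟩ := by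
    apply Fin.ext
    show y.val = x.val + (y.val - x.val - 1) + 1
    omega
  rw [hy]
  exact key _ x _

lemma descent_exists {n : ℕ} (π : Equiv.Perm (Fin n)) (hπ : π ≠ 1) :
    ∃ k, ∃ hk : k + 1 < n, π ⟨k + 1, hk⟩ < π ⟨k, by omega⟩ := by
  by_contra hcon
  push_neg at hcon
  apply hπ
  apply eq_one_of_strictMono
  apply strictMono_of_adj
  intro k hk
  have h1 := hcon k hk
  have h2 : π ⟨k, by omega⟩ ≠ π ⟨k + 1, hk⟩ := by
    intro hc
    have := π.injective hc
    rw [Fin.ext_iff] at this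
    simp at this
  exact lt_of_le_of_ne h1 h2

lemma inv_card_lt {n : ℕ} (π : Equiv.Perm (Fin n)) (k : ℕ) (hk : k + 1 < n)
    (hdesc : π ⟨k + 1, hk⟩ < π ⟨k, by omega⟩) :
    Nv (π * Equiv.swap ⟨k, by omega⟩ ⟨k + 1, hk⟩) < Nv π := by
  classical
  set u : Fin n := ⟨k, by omega⟩ with hu
  set v : Fin n := ⟨k + 1, hk⟩ with hv
  set T := Equiv.swap u v with hT
  set A := Finset.univ.filter
    (fun p : Fin n × Fin n => p.1 < p.2 ∧ (π * T) p.2 < (π * T) p.1) with hA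
  set B := Finset.univ.filter
    (fun p : Fin n × Fin n => p.1 < p.2 ∧ π p.2 < π p.1) with hB
  have huv : u < v := by rw [Fin.lt_def]; simp [hu, hv]
  have huvB : (u, v) ∈ B := by
    rw [hB, Finset.mem_filter]
    exact ⟨Finset.mem_univ _, huv, hdesc⟩
  have hTu : T u = v := Equiv.swap_apply_left u v
  have hTv : T v = u := Equiv.swap_apply_right u v
  have hTval : ∀ z : Fin n, (T z).val =
      if z.val = k then k + 1 else if z.val = k + 1 then k else z.val := by
    intro z
    rcases eq_or_ne z u with rfl | hzu
    · rw [hTu]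
      have : u.val = k := rfl
      simp [this, hv]
    · rcases eq_or_ne z v with rfl | hzv
      · rw [hTv]
        have h1 : v.val = k + 1 := rfl
        have h2 : (k : ℕ) + 1 ≠ k := by omega
        simp [h1, hu]
      · rw [Equiv.swap_apply_of_ne_of_ne hzu hzv]
        have h1 : z.val ≠ k := fun hc => hzu (Fin.ext (by simpa [hu] using hc))
        have h2 : z.val ≠ k + 1 := fun hc => hzv (Fin.ext (by simpa [hv] using hc))
        simp [h1, h2]
  have hmap : ∀ p ∈ A, (T p.1, T p.2) ∈ B.erase (u, v) := by
    rintro ⟨x, y⟩ hp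
    rw [hA, Finset.mem_filter] at hp
    obtain ⟨-, hxy, hinv⟩ := hp
    rw [Equiv.Perm.mul_apply, Equiv.Perm.mul_apply] at hinv
    have hxyv : x.val < y.val := hxy
    have hne : ¬(x.val = k ∧ y.val = k + 1) := by
      rintro ⟨h1, h2⟩
      have hxu : x = u := Fin.ext h1
      have hyv : y = v := Fin.ext h2
      rw [hxu, hyv, hTu, hTv] at hinv
      exact absurd hinv (asymm hdesc)
    rw [Finset.mem_erase]
    constructor
    · intro hc
      rw [Prod.ext_iff] at hc
      obtain ⟨hc1, hc2⟩ := hc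
      have e1 : (T x).val = k := by
        have := congrArg Fin.val hc1
        simpa using this
      have e2 : (T y).val = k + 1 := by
        have := congrArg Fin.val hc2
        simpa using this
      rw [hTval x] at e1
      rw [hTval y] at e2
      revert e1 e2
      split_ifs <;> omega
    · rw [hB, Finset.mem_filter]
      refine ⟨Finset.mem_univ _, ?_, hinv⟩
      rw [Fin.lt_def, hTval x, hTval y]
      have hkn : k + 1 < n := hk
      split_ifs <;> omega
  have hinj : Set.InjOn (fun p : Fin n × Fin n => (T p.1, T p.2)) A := by
    rintro ⟨x1, y1⟩ - ⟨x2, y2⟩ - heq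
    rw [Prod.ext_iff] at heq
    obtain ⟨h1, h2⟩ := heq
    simp only at h1 h2
    have hx := T.injective h1
    have hy := T.injective h2
    rw [Prod.ext_iff]
    exact ⟨hx, hy⟩
  have hcards : A.card ≤ (B.erase (u, v)).card :=
    Finset.card_le_card_of_injOn _ hmap hinj
  have herase : (B.erase (u, v)).card = B.card - 1 := Finset.card_erase_of_mem huvB
  have hBpos : 0 < B.card := Finset.card_pos.2 ⟨(u, v), huvB⟩
  rw [herase] at hcards
  have : Nv (π * T) = A.card := rfl
  rw [this]
  have : Nv π = B.card := rfl
  rw [this]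
  omega

lemma closure_sgen_eq {n : ℕ} (S : Set (Fin (n - 1))) :
    closure (sgen n '' S) = YSub n S := by
  apply le_antisymm
  · rw [closure_le]
    rintro x ⟨i, hiS, rfl⟩
    exact sgen_mem_YSub (fun j hj hc => hj (by rw [hc]; exact hiS))
  · intro π hπ
    suffices H : ∀ N (π : Equiv.Perm (Fin n)), π ∈ YSub n S → Nv π = N →
        π ∈ closure (sgen n '' S) from H (Nv π) π hπ rfl
    intro N
    induction N using Nat.strong_induction_on with
    | _ N IH =>
      intro π hπY hNv
      rcases eq_or_ne π 1 with rfl | hπ1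
      · exact one_mem _
      · obtain ⟨k, hk, hdesc⟩ := descent_exists π hπ1
        have hkn : k < n - 1 := by omega
        set j : Fin (n - 1) := ⟨k, hkn⟩ with hj
        have hjv : j.val = k := rfl
        have hjS : j ∈ S := by
          by_contra hjS
          have h2 : (π ⟨k + 1, hk⟩).val ≤ j.val := by
            have hd : (π ⟨k + 1, hk⟩).val < (π ⟨k, by omega⟩).val := hdesc
            have h1 : (π ⟨k, by omega⟩).val ≤ j.val :=
              hπY j hjS ⟨k, by omega⟩ (by show k ≤ j.val; omega)
            omega
          have hπinv := (YSub n S).inv_mem hπY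
          have h3 := hπinv j hjS (π ⟨k + 1, hk⟩) h2
          rw [Equiv.Perm.inv_def, Equiv.symm_apply_apply] at h3
          have : k + 1 ≤ j.val := h3
          omega
        have hsj : sgen n j ∈ YSub n S :=
          sgen_mem_YSub (fun j' hj' hc => hj' (by rw [hc]; exact hjS))
        set π' := π * sgen n j with hπ'
        have hπ'Y : π' ∈ YSub n S := mul_mem hπY hsj
        have hlt : Nv π' < Nv π := inv_card_lt π k hk hdesc
        have hmem' := IH (Nv π') (by omega) π' hπ'Y rfl
        have hfinal : π = π' * sgen n j := by
          rw [hπ', mul_assoc]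
          have hss : sgen n j * sgen n j = 1 := by
            rw [sgen]; exact Equiv.swap_mul_self _ _
          rw [hss, mul_one]
        rw [hfinal]
        exact mul_mem hmem' (subset_closure ⟨j, hjS, rfl⟩)

lemma YSub_univ {n : ℕ} : YSub n (Set.univ : Set (Fin (n - 1))) = ⊤ := by
  rw [eq_top_iff]
  intro π _
  rw [mem_YSub]
  intro j hj
  exact absurd (Set.mem_univ j) hj

lemma YSub_inf {n : ℕ} (I J : Set (Fin (n - 1))) :
    YSub n I ⊓ YSub n J = YSub n (I ∩ J) := by
  ext π
  rw [Subgroup.mem_inf, mem_YSub, mem_YSub, mem_YSub]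
  constructor
  · rintro ⟨h1, h2⟩ j hj
    by_cases hjI : j ∈ I
    · exact h2 j (fun hc => hj ⟨hjI, hc⟩)
    · exact h1 j hjI
  · intro hh
    constructor
    · intro j hj
      exact hh j (fun hc => hj hc.1)
    · intro j hj
      exact hh j (fun hc => hj hc.2)

lemma sgen_orderOf {n : ℕ} (i : Fin (n - 1)) : orderOf (sgen n i) = 2 := by
  have : Fact (Nat.Prime 2) := ⟨Nat.prime_two⟩
  apply orderOf_eq_prime
  · rw [pow_two, sgen]; exact Equiv.swap_mul_self _ _
  · rw [sgen]
    intro hc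
    have h1 := Equiv.swap_eq_one_iff.mp hc
    have h2 : i.val = i.val + 1 := congrArg Fin.val h1
    omega

lemma sgen_commute {n : ℕ} (i j : Fin (n - 1)) (h : i.val + 1 < j.val) :
    Commute (sgen n i) (sgen n j) := by
  apply Equiv.Perm.Disjoint.commute
  intro x
  rw [sgen, sgen]
  have hjlt : j.val < n - 1 := j.isLt
  by_cases hx : x.val = i.val ∨ x.val = i.val + 1
  · right
    apply Equiv.swap_apply_of_ne_of_ne
    · intro hc
      have hcv : x.val = j.val := congrArg Fin.val hc
      omega
    · intro hc
      have hcv : x.val = j.val + 1 := congrArg Fin.val hc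
      omega
  · left
    push_neg at hx
    apply Equiv.swap_apply_of_ne_of_ne
    · intro hc
      have hcv : x.val = i.val := congrArg Fin.val hc
      exact hx.1 hcv
    · intro hc
      have hcv : x.val = i.val + 1 := congrArg Fin.val hc
      exact hx.2 hcv

end Existence

/-- The string C-rank of the symmetric group `S_n` is `n - 1` for `n ≥ 3`. -/
theorem symmetricGroup_stringCRank (n : ℕ) (hn : 3 ≤ n) :
    (∃ ρ : Fin (n - 1) → Equiv.Perm (Fin n), IsStringCGroupRep ρ) ∧
    (∀ (r : ℕ) (ρ : Fin r → Equiv.Perm (Fin n)), IsStringCGroupRep ρ → r ≤ n - 1) := by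
  constructor
  · refine ⟨sgen n, sgen_orderOf, ?_, fun i j h => sgen_commute i j h, fun I J => ?_⟩
    · rw [← Set.image_univ, closure_sgen_eq, YSub_univ]
    · rw [closure_sgen_eq, closure_sgen_eq, closure_sgen_eq, YSub_inf]
  · intro r ρ h
    exact upper_bound hn r ρ h
end

section
/- For every integer n ≥ 4, the symmetric group S_n has at least one string C-group representation of rank 3. -/
open Subgroup

/-- transport a string C-group representation along a group isomorphism -/
lemma isStringCGroupRep_map {G H : Type*} [Group G] [Group H] {k : ℕ} {ρ : Fin k → G}
    (h : IsStringCGroupRep ρ) (Φ : G ≃* H) : IsStringCGroupRep (fun i => Φ (ρ i)) := by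
  obtain ⟨h1, h2, h3, h4⟩ := h
  refine ⟨?_, ?_, ?_, ?_⟩
  · intro i
    rw [show ((fun i => Φ (ρ i)) i) = Φ.toMonoidHom (ρ i) from rfl,
      orderOf_injective Φ.toMonoidHom Φ.injective, h1 i]
  · have hr : Set.range (fun i => Φ (ρ i)) = Φ '' Set.range ρ := by
      rw [← Set.range_comp]; rfl
    rw [hr, ← MulEquiv.coe_toMonoidHom, ← MonoidHom.map_closure, h2]
    exact Subgroup.map_top_of_surjective _ Φ.surjective
  · intro i j hij
    exact (h3 i j hij).map Φ.toMonoidHom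
  · intro I J
    have himg : ∀ S : Set (Fin k), ((fun i => Φ (ρ i)) '' S) = Φ.toMonoidHom '' (ρ '' S) := by
      intro S; rw [Set.image_image]; rfl
    rw [himg, himg, himg, ← MonoidHom.map_closure, ← MonoidHom.map_closure,
      ← MonoidHom.map_closure, ← Subgroup.map_inf _ _ Φ.toMonoidHom Φ.injective, h4]

/-- `Equiv.permCongr` as a `MulEquiv`. -/
def permMulEquiv {α β : Type*} (e : α ≃ β) : Equiv.Perm α ≃* Equiv.Perm β :=
  { Equiv.permCongr e with
    map_mul' := fun f g => by
      ext x
      simp [Equiv.permCongr_apply, Equiv.Perm.mul_apply] }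

lemma set_fin3_cases (I : Set (Fin 3)) :
    I = ∅ ∨ I = {0} ∨ I = {1} ∨ I = {2} ∨ I = {0,1} ∨ I = {0,2} ∨ I = {1,2} ∨ I = Set.univ := by
  by_cases h0 : (0 : Fin 3) ∈ I <;> by_cases h1 : (1 : Fin 3) ∈ I <;> by_cases h2 : (2 : Fin 3) ∈ I
  · refine Or.inr (Or.inr (Or.inr (Or.inr (Or.inr (Or.inr (Or.inr ?_))))))
    ext x; fin_cases x <;> simp [h0, h1, h2]
  · refine Or.inr (Or.inr (Or.inr (Or.inr (Or.inl ?_))))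
    ext x; fin_cases x <;> simp [h0, h1, h2]
  · refine Or.inr (Or.inr (Or.inr (Or.inr (Or.inr (Or.inl ?_)))))
    ext x; fin_cases x <;> simp [h0, h1, h2]
  · refine Or.inr (Or.inl ?_)
    ext x; fin_cases x <;> simp [h0, h1, h2]
  · refine Or.inr (Or.inr (Or.inr (Or.inr (Or.inr (Or.inr (Or.inl ?_))))))
    ext x; fin_cases x <;> simp [h0, h1, h2]
  · refine Or.inr (Or.inr (Or.inl ?_))
    ext x; fin_cases x <;> simp [h0, h1, h2]
  · refine Or.inr (Or.inr (Or.inr (Or.inl ?_)))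
    ext x; fin_cases x <;> simp [h0, h1, h2]
  · refine Or.inl ?_
    ext x; fin_cases x <;> simp [h0, h1, h2]


set_option maxHeartbeats 1600000 in
lemma rank3_intersection {G : Type*} [Group G] (ρ : Fin 3 → G)
    (htop : closure (Set.range ρ) = ⊤)
    (h01 : closure {ρ 0} ⊓ closure {ρ 1} = ⊥)
    (h02 : closure {ρ 0} ⊓ closure {ρ 2} = ⊥)
    (h12 : closure {ρ 1} ⊓ closure {ρ 2} = ⊥)
    (h0_12 : closure {ρ 0} ⊓ closure {ρ 1, ρ 2} = ⊥)
    (h1_02 : closure {ρ 1} ⊓ closure {ρ 0, ρ 2} = ⊥)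
    (h2_01 : closure {ρ 2} ⊓ closure {ρ 0, ρ 1} = ⊥)
    (hP1 : closure {ρ 0, ρ 1} ⊓ closure {ρ 1, ρ 2} = closure {ρ 1})
    (hP0 : closure {ρ 0, ρ 1} ⊓ closure {ρ 0, ρ 2} = closure {ρ 0})
    (hP2 : closure {ρ 0, ρ 2} ⊓ closure {ρ 1, ρ 2} = closure {ρ 2}) :
    ∀ I J : Set (Fin 3),
      closure (ρ '' I) ⊓ closure (ρ '' J) = closure (ρ '' (I ∩ J)) := by
  have e1 : ({0} : Set (Fin 3)) ∩ {1} = (∅ : Set (Fin 3)) := by ext x; fin_cases x <;> simp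
  have e2 : ({0} : Set (Fin 3)) ∩ {2} = (∅ : Set (Fin 3)) := by ext x; fin_cases x <;> simp
  have e3 : ({0} : Set (Fin 3)) ∩ {0,1} = ({0} : Set (Fin 3)) := by ext x; fin_cases x <;> simp
  have e4 : ({0} : Set (Fin 3)) ∩ {0,2} = ({0} : Set (Fin 3)) := by ext x; fin_cases x <;> simp
  have e5 : ({0} : Set (Fin 3)) ∩ {1,2} = (∅ : Set (Fin 3)) := by ext x; fin_cases x <;> simp
  have e6 : ({1} : Set (Fin 3)) ∩ {0} = (∅ : Set (Fin 3)) := by ext x; fin_cases x <;> simp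
  have e7 : ({1} : Set (Fin 3)) ∩ {2} = (∅ : Set (Fin 3)) := by ext x; fin_cases x <;> simp
  have e8 : ({1} : Set (Fin 3)) ∩ {0,1} = ({1} : Set (Fin 3)) := by ext x; fin_cases x <;> simp
  have e9 : ({1} : Set (Fin 3)) ∩ {0,2} = (∅ : Set (Fin 3)) := by ext x; fin_cases x <;> simp
  have e10 : ({1} : Set (Fin 3)) ∩ {1,2} = ({1} : Set (Fin 3)) := by ext x; fin_cases x <;> simp
  have e11 : ({2} : Set (Fin 3)) ∩ {0} = (∅ : Set (Fin 3)) := by ext x; fin_cases x <;> simp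
  have e12 : ({2} : Set (Fin 3)) ∩ {1} = (∅ : Set (Fin 3)) := by ext x; fin_cases x <;> simp
  have e13 : ({2} : Set (Fin 3)) ∩ {0,1} = (∅ : Set (Fin 3)) := by ext x; fin_cases x <;> simp
  have e14 : ({2} : Set (Fin 3)) ∩ {0,2} = ({2} : Set (Fin 3)) := by ext x; fin_cases x <;> simp
  have e15 : ({2} : Set (Fin 3)) ∩ {1,2} = ({2} : Set (Fin 3)) := by ext x; fin_cases x <;> simp
  have e16 : ({0,1} : Set (Fin 3)) ∩ {0} = ({0} : Set (Fin 3)) := by ext x; fin_cases x <;> simp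
  have e17 : ({0,1} : Set (Fin 3)) ∩ {1} = ({1} : Set (Fin 3)) := by ext x; fin_cases x <;> simp
  have e18 : ({0,1} : Set (Fin 3)) ∩ {2} = (∅ : Set (Fin 3)) := by ext x; fin_cases x <;> simp
  have e19 : ({0,1} : Set (Fin 3)) ∩ {0,2} = ({0} : Set (Fin 3)) := by ext x; fin_cases x <;> simp
  have e20 : ({0,1} : Set (Fin 3)) ∩ {1,2} = ({1} : Set (Fin 3)) := by ext x; fin_cases x <;> simp
  have e21 : ({0,2} : Set (Fin 3)) ∩ {0} = ({0} : Set (Fin 3)) := by ext x; fin_cases x <;> simp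
  have e22 : ({0,2} : Set (Fin 3)) ∩ {1} = (∅ : Set (Fin 3)) := by ext x; fin_cases x <;> simp
  have e23 : ({0,2} : Set (Fin 3)) ∩ {2} = ({2} : Set (Fin 3)) := by ext x; fin_cases x <;> simp
  have e24 : ({0,2} : Set (Fin 3)) ∩ {0,1} = ({0} : Set (Fin 3)) := by ext x; fin_cases x <;> simp
  have e25 : ({0,2} : Set (Fin 3)) ∩ {1,2} = ({2} : Set (Fin 3)) := by ext x; fin_cases x <;> simp
  have e26 : ({1,2} : Set (Fin 3)) ∩ {0} = (∅ : Set (Fin 3)) := by ext x; fin_cases x <;> simp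
  have e27 : ({1,2} : Set (Fin 3)) ∩ {1} = ({1} : Set (Fin 3)) := by ext x; fin_cases x <;> simp
  have e28 : ({1,2} : Set (Fin 3)) ∩ {2} = ({2} : Set (Fin 3)) := by ext x; fin_cases x <;> simp
  have e29 : ({1,2} : Set (Fin 3)) ∩ {0,1} = ({1} : Set (Fin 3)) := by ext x; fin_cases x <;> simp
  have e30 : ({1,2} : Set (Fin 3)) ∩ {0,2} = ({2} : Set (Fin 3)) := by ext x; fin_cases x <;> simp
  have su1 : ({ρ 0} : Set G) ⊆ {ρ 0, ρ 1} := by simp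
  have su2 : ({ρ 0} : Set G) ⊆ {ρ 0, ρ 2} := by simp
  have su3 : ({ρ 1} : Set G) ⊆ {ρ 0, ρ 1} := by simp
  have su4 : ({ρ 1} : Set G) ⊆ {ρ 1, ρ 2} := by simp
  have su5 : ({ρ 2} : Set G) ⊆ {ρ 0, ρ 2} := by simp
  have su6 : ({ρ 2} : Set G) ⊆ {ρ 1, ρ 2} := by simp
  intro I J
  rcases set_fin3_cases I with rfl | rfl | rfl | rfl | rfl | rfl | rfl | rfl <;>
    rcases set_fin3_cases J with rfl | rfl | rfl | rfl | rfl | rfl | rfl | rfl <;>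
    simp only [e1, e2, e3, e4, e5, e6, e7, e8, e9, e10, e11, e12, e13, e14, e15, e16, e17, e18, e19, e20, e21, e22, e23, e24, e25, e26, e27, e28, e29, e30, Set.empty_inter, Set.inter_empty, Set.univ_inter, Set.inter_univ,
      Set.inter_self, Set.image_empty, Set.image_singleton, Set.image_insert_eq,
      Set.image_univ, Subgroup.closure_empty, htop] <;>
    first
      | simp only [bot_inf_eq]
      | simp only [inf_bot_eq]
      | simp only [top_inf_eq]
      | simp only [inf_top_eq]
      | simp only [inf_idem]
      | exact h01 | exact h02 | exact h12 | exact h0_12 | exact h1_02 | exact h2_01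
      | exact hP1 | exact hP0 | exact hP2
      | (rw [inf_comm]; first
          | exact h01 | exact h02 | exact h12 | exact h0_12 | exact h1_02 | exact h2_01
          | exact hP1 | exact hP0 | exact hP2)
      | exact inf_eq_left.mpr (Subgroup.closure_mono su1)
      | exact inf_eq_right.mpr (Subgroup.closure_mono su1)
      | exact inf_eq_left.mpr (Subgroup.closure_mono su2)
      | exact inf_eq_right.mpr (Subgroup.closure_mono su2)
      | exact inf_eq_left.mpr (Subgroup.closure_mono su3)
      | exact inf_eq_right.mpr (Subgroup.closure_mono su3)
      | exact inf_eq_left.mpr (Subgroup.closure_mono su4)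
      | exact inf_eq_right.mpr (Subgroup.closure_mono su4)
      | exact inf_eq_left.mpr (Subgroup.closure_mono su5)
      | exact inf_eq_right.mpr (Subgroup.closure_mono su5)
      | exact inf_eq_left.mpr (Subgroup.closure_mono su6)
      | exact inf_eq_right.mpr (Subgroup.closure_mono su6)

section GroupAux
variable {G : Type*} [Group G]

lemma sq_one_zpow {g : G} (hg : g * g = 1) (k : ℤ) : g ^ k = 1 ∨ g ^ k = g := by
  have h2 : g ^ (2 : ℤ) = 1 := by
    rw [show (2:ℤ) = 1 + 1 by ring, zpow_add, zpow_one, hg]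
  have hk : g ^ k = g ^ (k % 2) := by
    conv_lhs => rw [← Int.mul_ediv_add_emod k 2]
    rw [zpow_add, zpow_mul, h2, one_zpow, one_mul]
  rcases Int.emod_two_eq_zero_or_one k with h | h <;> rw [hk, h]
  · left; exact zpow_zero g
  · right; exact zpow_one g

lemma mem_closure_singleton_sq_one {x h : G} (hx : x * x = 1)
    (hh : h ∈ closure ({x} : Set G)) : h = 1 ∨ h = x := by
  obtain ⟨k, hk⟩ := Subgroup.mem_closure_singleton.mp hh
  rcases sq_one_zpow hx k with h1 | h1 <;> rw [← hk, h1] <;> simp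

lemma dihedral_form {a c : G} (ha : a * a = 1) (hc : c * c = 1) {h : G}
    (hh : h ∈ closure ({a, c} : Set G)) :
    ∃ k : ℤ, h = (a * c) ^ k ∨ h = a * (a * c) ^ k := by
  set r := a * c with hr
  have hainv : a⁻¹ = a := inv_eq_of_mul_eq_one_right ha
  have hcinv : c⁻¹ = c := inv_eq_of_mul_eq_one_right hc
  have hconj : ∀ k : ℤ, a * r ^ k * a = r ^ (-k) := by
    intro k
    have h1 : a * r * a⁻¹ = r⁻¹ := by
      rw [hr, hainv, mul_inv_rev, hainv, hcinv,
        show a * (a * c) = c by rw [← mul_assoc, ha, one_mul]]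
    calc a * r ^ k * a = (a * r * a⁻¹) ^ k := by rw [conj_zpow, hainv]
      _ = r ^ (-k) := by rw [h1, inv_zpow, zpow_neg]
  induction hh using closure_induction with
  | mem x hx =>
    rcases hx with rfl | rfl
    · exact ⟨0, Or.inr (by rw [zpow_zero, mul_one])⟩
    · exact ⟨1, Or.inr (by rw [zpow_one, hr, ← mul_assoc, ha, one_mul])⟩
  | one => exact ⟨0, Or.inl (zpow_zero r).symm⟩
  | mul x y hx hy ihx ihy =>
    obtain ⟨j, hj | hj⟩ := ihx <;> obtain ⟨k, hk | hk⟩ := ihy <;> subst hj <;> subst hk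
    · exact ⟨j + k, Or.inl (zpow_add r j k).symm⟩
    · refine ⟨k - j, Or.inr ?_⟩
      calc r ^ j * (a * r ^ k) = a * (a * r ^ j * a) * r ^ k := by
            rw [← mul_assoc, ← mul_assoc, ← mul_assoc, ha, one_mul]
        _ = a * r ^ (k - j) := by rw [hconj, mul_assoc, ← zpow_add, neg_add_eq_sub]
    · exact ⟨j + k, Or.inr (by rw [mul_assoc, ← zpow_add])⟩
    · refine ⟨k - j, Or.inl ?_⟩
      calc a * r ^ j * (a * r ^ k) = (a * r ^ j * a) * r ^ k := by rw [← mul_assoc]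
        _ = r ^ (k - j) := by rw [hconj, ← zpow_add, neg_add_eq_sub]
  | inv x hx ihx =>
    obtain ⟨j, hj | hj⟩ := ihx <;> subst hj
    · exact ⟨-j, Or.inl (by rw [zpow_neg])⟩
    · refine ⟨j, Or.inr ?_⟩
      rw [mul_inv_rev, hainv, ← zpow_neg, ← hconj j, mul_assoc, ha, mul_one]

lemma klein_form {a c : G} (ha : a * a = 1) (hc : c * c = 1) (hcomm : a * c = c * a)
    {h : G} (hh : h ∈ closure ({a, c} : Set G)) :
    h = 1 ∨ h = a ∨ h = c ∨ h = a * c := by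
  have hr2 : (a * c) * (a * c) = 1 := by
    rw [mul_assoc, ← mul_assoc c, ← hcomm, mul_assoc a c c, hc, mul_one, ha]
  obtain ⟨k, hk | hk⟩ := dihedral_form ha hc hh <;>
    rcases sq_one_zpow hr2 k with h1 | h1 <;> rw [h1] at hk
  · exact Or.inl hk
  · exact Or.inr (Or.inr (Or.inr hk))
  · rw [mul_one] at hk; exact Or.inr (Or.inl hk)
  · rw [← mul_assoc, ha, one_mul] at hk; exact Or.inr (Or.inr (Or.inl hk))

end GroupAux



namespace SCGAux

variable (m : ℕ)

/-- The ground set: an apex `none` plus a cycle `ZMod m`. -/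
abbrev Pt := Option (ZMod m)

def a0 : Equiv.Perm (Pt m) := Equiv.swap none (some 0)

def f1 : Equiv.Perm (ZMod m) :=
  Function.Involutive.toPerm (fun x => 1 - x) (fun x => by ring_nf)

def f2 : Equiv.Perm (ZMod m) :=
  Function.Involutive.toPerm (fun x => - x) neg_neg

def a1 : Equiv.Perm (Pt m) := (f1 m).optionCongr

def a2 : Equiv.Perm (Pt m) := (f2 m).optionCongr

@[simp] lemma a0_none : a0 m none = some 0 := Equiv.swap_apply_left _ _
@[simp] lemma a0_some0 : a0 m (some 0) = none := Equiv.swap_apply_right _ _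
lemma a0_some {x : ZMod m} (hx : x ≠ 0) : a0 m (some x) = some x :=
  Equiv.swap_apply_of_ne_of_ne (by simp) (by simp [hx])

@[simp] lemma a1_none : a1 m none = none := rfl
@[simp] lemma a1_some (x : ZMod m) : a1 m (some x) = some (1 - x) := rfl
@[simp] lemma a2_none : a2 m none = none := rfl
@[simp] lemma a2_some (x : ZMod m) : a2 m (some x) = some (- x) := rfl

lemma a0_sq : a0 m * a0 m = 1 := Equiv.swap_mul_self _ _
lemma a1_sq : a1 m * a1 m = 1 := by
  ext x; cases x <;> simp [Equiv.Perm.mul_apply]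
lemma a2_sq : a2 m * a2 m = 1 := by
  ext x; cases x <;> simp [Equiv.Perm.mul_apply]

/-- rotation -/
def r : Equiv.Perm (Pt m) := a1 m * a2 m

@[simp] lemma r_none : r m none = none := rfl
@[simp] lemma r_some (x : ZMod m) : r m (some x) = some (x + 1) := by
  show a1 m (a2 m (some x)) = _
  simp [sub_neg_eq_add, add_comm]

@[simp] lemma r_inv_none : (r m)⁻¹ none = none := by
  nth_rewrite 1 [← r_none m]
  exact Equiv.symm_apply_apply _ _
@[simp] lemma r_inv_some (x : ZMod m) : (r m)⁻¹ (some x) = some (x - 1) := by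
  have h : r m (some (x-1)) = some x := by simp
  rw [← h]; exact Equiv.symm_apply_apply _ _

lemma r_zpow_none (k : ℤ) : ((r m) ^ k) none = none := by
  induction k using Int.induction_on with
  | zero => rfl
  | succ i ih => rw [zpow_add_one, Equiv.Perm.mul_apply, r_none, ih]
  | pred i ih => rw [zpow_sub_one, Equiv.Perm.mul_apply, r_inv_none, ih]

lemma r_zpow_some (k : ℤ) (x : ZMod m) : ((r m) ^ k) (some x) = some (x + k) := by
  induction k using Int.induction_on generalizing x with
  | zero => simp
  | succ i ih => rw [zpow_add_one, Equiv.Perm.mul_apply, r_some, ih]; push_cast; ring_nf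
  | pred i ih => rw [zpow_sub_one, Equiv.Perm.mul_apply, r_inv_some, ih]; push_cast; ring_nf

lemma r_zpow_eq_one {k : ℤ} (hk : (k : ZMod m) = 0) : (r m) ^ k = 1 := by
  ext x
  cases x with
  | none => rw [r_zpow_none]; rfl
  | some x => rw [r_zpow_some, hk, add_zero]; rfl

/-- the set `{none, some 0, some 1}` as a predicate -/
def inA : Pt m → Prop := fun x => x = none ∨ x = some 0 ∨ x = some 1

/-- the setwise stabilizer of `{none, some 0, some 1}` -/
def stabA : Subgroup (Equiv.Perm (Pt m)) where
  carrier := {g | ∀ x, inA m x ↔ inA m (g x)}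
  one_mem' := fun x => Iff.rfl
  mul_mem' := by
    intro a b ha hb x
    exact (hb x).trans (ha (b x))
  inv_mem' := by
    intro a ha x
    have := ha (a⁻¹ x)
    rw [show a (a⁻¹ x) = x from Equiv.apply_symm_apply _ _] at this
    exact this.symm

lemma a0_mem_stabA : a0 m ∈ stabA m := by
  intro x
  rcases x with _ | y
  · simp [inA]
  · by_cases hy : y = 0
    · subst hy; simp [inA]
    · rw [a0_some m hy]

lemma a1_mem_stabA : a1 m ∈ stabA m := by
  intro x
  rcases x with _ | y
  · simp [inA]
  · simp only [inA, a1_some, reduceCtorEq, Option.some.injEq, false_or]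
    constructor
    · rintro (rfl | rfl) <;> simp
    · rintro (h | h)
      · right; linear_combination -h
      · left; linear_combination -h

lemma H01_le_stabA : closure {a0 m, a1 m} ≤ stabA m := by
  rw [Subgroup.closure_le]
  rintro x (rfl | rfl)
  · exact a0_mem_stabA m
  · exact a1_mem_stabA m

lemma H12_fixes_none {h : Equiv.Perm (Pt m)} (hh : h ∈ closure {a1 m, a2 m}) :
    h none = none := by
  induction hh using closure_induction with
  | mem x hx => rcases hx with rfl | rfl <;> simp
  | one => rfl
  | mul x y hx hy ihx ihy => rw [Equiv.Perm.mul_apply, ihy, ihx]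
  | inv x hx ihx => nth_rewrite 1 [← ihx]; exact Equiv.symm_apply_apply _ _

variable {m}

lemma one_ne_zero' (hm : 3 ≤ m) : (1 : ZMod m) ≠ 0 := by
  intro h
  have h2 : ((1 : ℕ) : ZMod m) = 0 := by push_cast; exact h
  have := Nat.le_of_dvd one_pos ((ZMod.natCast_eq_zero_iff 1 m).mp h2)
  omega

lemma two_ne_zero' (hm : 3 ≤ m) : (2 : ZMod m) ≠ 0 := by
  intro h
  have h2 : ((2 : ℕ) : ZMod m) = 0 := by push_cast; exact h
  have := Nat.le_of_dvd two_pos ((ZMod.natCast_eq_zero_iff 2 m).mp h2)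
  omega

lemma neg_one_notA (hm : 3 ≤ m) : ¬ inA m (some (-1 : ZMod m)) := by
  rintro (h | h | h)
  · cases h
  · rw [Option.some.injEq] at h
    exact one_ne_zero' hm (by linear_combination -h)
  · rw [Option.some.injEq] at h
    exact two_ne_zero' hm (by linear_combination -h)

lemma swap_none_mem (hm : 3 ≤ m) (z : ZMod m) :
    Equiv.swap none (some z) ∈ closure {a0 m, a1 m, a2 m} := by
  set G := closure {a0 m, a1 m, a2 m} with hG
  have ha0 : a0 m ∈ G := subset_closure (by simp)
  have ha1 : a1 m ∈ G := subset_closure (by simp)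
  have ha2 : a2 m ∈ G := subset_closure (by simp)
  have conj_mem : ∀ g ∈ G, ∀ w : Pt m, Equiv.swap none w ∈ G →
      Equiv.swap (g none) (g w) ∈ G := by
    intro g hg w hw
    rw [Equiv.swap_apply_apply]
    exact mul_mem (mul_mem hg hw) (inv_mem hg)
  have key : ∀ k : ℤ, Equiv.swap none (some (k : ZMod m)) ∈ G := by
    intro k
    induction k using Int.induction_on with
    | zero => simpa using (show Equiv.swap none (some 0) ∈ G from ha0)
    | succ i ih =>
      have h2 : Equiv.swap none (some (-(((i : ℤ)) : ZMod m))) ∈ G := by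
        have := conj_mem _ ha2 _ ih
        simp only [a2_none, a2_some] at this
        exact this
      have := conj_mem _ ha1 _ h2
      simp only [a1_none, a1_some] at this
      have hcast : (((i : ℤ) + 1 : ℤ) : ZMod m) = 1 - - (((i : ℤ) : ZMod m)) := by
        push_cast; ring
      rw [hcast]
      exact this
    | pred i ih =>
      have h1 : Equiv.swap none (some (1 - ((-(i:ℤ) : ℤ) : ZMod m))) ∈ G := by
        have := conj_mem _ ha1 _ ih
        simp only [a1_none, a1_some] at this
        exact this
      have := conj_mem _ ha2 _ h1
      simp only [a2_none, a2_some] at this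
      have hcast : (((-(i:ℤ) - 1 : ℤ)) : ZMod m) = - (1 - ((-(i:ℤ) : ℤ) : ZMod m)) := by
        push_cast; ring
      rw [hcast]
      exact this
  obtain ⟨k, rfl⟩ := ZMod.intCast_surjective z
  exact key k

lemma closure_eq_top (hm : 3 ≤ m) : closure {a0 m, a1 m, a2 m} = ⊤ := by
  haveI : NeZero m := ⟨by omega⟩
  set G := closure {a0 m, a1 m, a2 m} with hG
  have hswap : ∀ u v : Pt m, Equiv.swap u v ∈ G := by
    have hnone : ∀ w : Pt m, Equiv.swap none w ∈ G := by
      intro w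
      rcases w with _ | z
      · simp only [Equiv.swap_self]
        exact one_mem G
      · exact swap_none_mem hm z
    intro u v
    rcases u with _ | x
    · exact hnone v
    · rcases v with _ | y
      · rw [Equiv.swap_comm]; exact hnone _
      · by_cases hxy : x = y
        · subst hxy; simp only [Equiv.swap_self]; exact one_mem G
        · have hσ : Equiv.swap (none : Pt m) (some x) ∈ G := hnone _
          have := Equiv.swap_apply_apply (Equiv.swap (none : Pt m) (some x)) none (some y)
          rw [Equiv.swap_apply_left,
            Equiv.swap_apply_of_ne_of_ne (by simp) (by simp [Ne, hxy, eq_comm])] at this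
          rw [this]
          exact mul_mem (mul_mem hσ (hnone (some y))) (inv_mem hσ)
  rw [eq_top_iff, ← Equiv.Perm.closure_isSwap, Subgroup.closure_le]
  rintro σ ⟨u, v, huv, rfl⟩
  exact hswap u v

lemma a2_not_mem_stabA (hm : 3 ≤ m) : a2 m ∉ stabA m := by
  intro h
  have := (h (some (-1 : ZMod m))).mpr
  rw [a2_some, neg_neg] at this
  exact neg_one_notA hm (this (Or.inr (Or.inr rfl)))

lemma a0a2_comm : a0 m * a2 m = a2 m * a0 m := by
  ext x
  rcases x with _ | y
  · simp [Equiv.Perm.mul_apply]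
  · by_cases hy : y = 0
    · subst hy; simp [Equiv.Perm.mul_apply]
    · rw [Equiv.Perm.mul_apply, Equiv.Perm.mul_apply, a2_some, a0_some m hy,
        a0_some m (by simpa using hy), a2_some]

-- pairwise distinctness helpers
lemma a0_ne_one : a0 m ≠ 1 := by
  intro h; have := congrArg (fun g : Equiv.Perm (Pt m) => g none) h; simp at this
lemma a1_ne_one (hm : 3 ≤ m) : a1 m ≠ 1 := by
  intro h; have := congrArg (fun g : Equiv.Perm (Pt m) => g (some 0)) h
  simp at this
  exact one_ne_zero' hm (by linear_combination this)
lemma a2_ne_one (hm : 3 ≤ m) : a2 m ≠ 1 := by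
  intro h; have := congrArg (fun g : Equiv.Perm (Pt m) => g (some 1)) h
  simp at this
  exact two_ne_zero' hm (by linear_combination -this)
lemma a0_ne_a1 : a0 m ≠ a1 m := by
  intro h; have := congrArg (fun g : Equiv.Perm (Pt m) => g none) h; simp at this
lemma a0_ne_a2 : a0 m ≠ a2 m := by
  intro h; have := congrArg (fun g : Equiv.Perm (Pt m) => g none) h; simp at this
lemma a1_ne_a2 (hm : 3 ≤ m) : a1 m ≠ a2 m := by
  intro h; have := congrArg (fun g : Equiv.Perm (Pt m) => g (some 0)) h
  simp at this
  exact one_ne_zero' hm (by linear_combination this)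
lemma a1_ne_a0a2 : a1 m ≠ a0 m * a2 m := by
  intro h; have := congrArg (fun g : Equiv.Perm (Pt m) => g none) h
  simp [Equiv.Perm.mul_apply] at this

-- C1-C3
lemma C1 (hm : 3 ≤ m) : closure {a0 m} ⊓ closure {a1 m} = (⊥ : Subgroup (Equiv.Perm (Pt m))) := by
  rw [eq_bot_iff]; rintro h ⟨h0, h1⟩
  rcases mem_closure_singleton_sq_one (a0_sq m) h0 with rfl | rfl
  · exact mem_bot.mpr rfl
  · rcases mem_closure_singleton_sq_one (a1_sq m) h1 with h | h
    · exact mem_bot.mpr h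
    · exact absurd h a0_ne_a1

lemma C2 (hm : 3 ≤ m) : closure {a0 m} ⊓ closure {a2 m} = (⊥ : Subgroup (Equiv.Perm (Pt m))) := by
  rw [eq_bot_iff]; rintro h ⟨h0, h2⟩
  rcases mem_closure_singleton_sq_one (a0_sq m) h0 with rfl | rfl
  · exact mem_bot.mpr rfl
  · rcases mem_closure_singleton_sq_one (a2_sq m) h2 with h | h
    · exact mem_bot.mpr h
    · exact absurd h a0_ne_a2

lemma C3 (hm : 3 ≤ m) : closure {a1 m} ⊓ closure {a2 m} = (⊥ : Subgroup (Equiv.Perm (Pt m))) := by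
  rw [eq_bot_iff]; rintro h ⟨h1, h2⟩
  rcases mem_closure_singleton_sq_one (a1_sq m) h1 with rfl | rfl
  · exact mem_bot.mpr rfl
  · rcases mem_closure_singleton_sq_one (a2_sq m) h2 with h | h
    · exact mem_bot.mpr h
    · exact absurd h (a1_ne_a2 hm)

-- C4 : ⟨a0⟩ ⊓ ⟨a1,a2⟩ = ⊥
lemma C4 (hm : 3 ≤ m) :
    closure {a0 m} ⊓ closure {a1 m, a2 m} = (⊥ : Subgroup (Equiv.Perm (Pt m))) := by
  rw [eq_bot_iff]; rintro h ⟨h0, h12⟩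
  rcases mem_closure_singleton_sq_one (a0_sq m) h0 with rfl | rfl
  · exact mem_bot.mpr rfl
  · have := H12_fixes_none m h12
    simp at this

-- C5 : ⟨a1⟩ ⊓ ⟨a0,a2⟩ = ⊥
lemma C5 (hm : 3 ≤ m) :
    closure {a1 m} ⊓ closure {a0 m, a2 m} = (⊥ : Subgroup (Equiv.Perm (Pt m))) := by
  rw [eq_bot_iff]; rintro h ⟨h1, h02⟩
  rcases mem_closure_singleton_sq_one (a1_sq m) h1 with rfl | rfl
  · exact mem_bot.mpr rfl
  · rcases klein_form (a0_sq m) (a2_sq m) a0a2_comm h02 with h | h | h | h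
    · exact absurd h (a1_ne_one hm)
    · exact absurd h a0_ne_a1.symm
    · exact absurd h (a1_ne_a2 hm)
    · exact absurd h a1_ne_a0a2

-- C6 : ⟨a2⟩ ⊓ ⟨a0,a1⟩ = ⊥
lemma C6 (hm : 3 ≤ m) :
    closure {a2 m} ⊓ closure {a0 m, a1 m} = (⊥ : Subgroup (Equiv.Perm (Pt m))) := by
  rw [eq_bot_iff]; rintro h ⟨h2, h01⟩
  rcases mem_closure_singleton_sq_one (a2_sq m) h2 with rfl | rfl
  · exact mem_bot.mpr rfl
  · exact absurd (H01_le_stabA m h01) (a2_not_mem_stabA hm)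

-- C7 : ⟨a0,a1⟩ ⊓ ⟨a1,a2⟩ = ⟨a1⟩
lemma C7 (hm : 3 ≤ m) :
    closure {a0 m, a1 m} ⊓ closure {a1 m, a2 m} = closure {a1 m} := by
  apply le_antisymm
  · rintro h ⟨h01, h12⟩
    have hA : ∀ x, inA m x ↔ inA m (h x) := H01_le_stabA m h01
    obtain ⟨k, hk | hk⟩ := dihedral_form (a1_sq m) (a2_sq m) h12
    · -- h = r ^ k
      rw [show a1 m * a2 m = r m from rfl] at hk
      have h0A : inA m (h (some 0)) := (hA (some 0)).mp (Or.inr (Or.inl rfl))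
      rw [hk, r_zpow_some, zero_add] at h0A
      rcases h0A with h' | h' | h'
      · exact absurd h' (by simp)
      · rw [Option.some.injEq] at h'
        rw [hk, r_zpow_eq_one m h']
        exact one_mem _
      · rw [Option.some.injEq] at h'
        have h1A : inA m (h (some 1)) := (hA (some 1)).mp (Or.inr (Or.inr rfl))
        rw [hk, r_zpow_some, h'] at h1A
        rcases h1A with h'' | h'' | h''
        · exact absurd h'' (by simp)
        · rw [Option.some.injEq] at h''
          exact absurd (by linear_combination h'' : (2 : ZMod m) = 0) (two_ne_zero' hm)
        · rw [Option.some.injEq] at h''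
          exact absurd (by linear_combination h'' : (1 : ZMod m) = 0) (one_ne_zero' hm)
    · -- h = a1 * r ^ k
      rw [show a1 m * a2 m = r m from rfl] at hk
      have h0A : inA m (h (some 0)) := (hA (some 0)).mp (Or.inr (Or.inl rfl))
      rw [hk, Equiv.Perm.mul_apply, r_zpow_some, zero_add, a1_some] at h0A
      rcases h0A with h' | h' | h'
      · exact absurd h' (by simp)
      · rw [Option.some.injEq] at h'
        have hk1 : (k : ZMod m) = 1 := by linear_combination -h'
        have := (hA (some (-1))).mpr
        rw [hk, Equiv.Perm.mul_apply, r_zpow_some, hk1] at this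
        rw [show (-1 : ZMod m) + 1 = 0 by ring] at this
        rw [a1_some, sub_zero] at this
        exact absurd (this (Or.inr (Or.inr rfl))) (neg_one_notA hm)
      · rw [Option.some.injEq] at h'
        have hk0 : (k : ZMod m) = 0 := by linear_combination -h'
        rw [hk, r_zpow_eq_one m hk0, mul_one]
        exact subset_closure rfl
  · exact le_inf (closure_mono (by simp)) (closure_mono (by simp))

-- C8 : ⟨a0,a1⟩ ⊓ ⟨a0,a2⟩ = ⟨a0⟩
lemma C8 (hm : 3 ≤ m) :
    closure {a0 m, a1 m} ⊓ closure {a0 m, a2 m} = closure {a0 m} := by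
  apply le_antisymm
  · rintro h ⟨h01, h02⟩
    rcases klein_form (a0_sq m) (a2_sq m) a0a2_comm h02 with rfl | rfl | rfl | rfl
    · exact one_mem _
    · exact subset_closure rfl
    · exact absurd (H01_le_stabA m h01) (a2_not_mem_stabA hm)
    · exfalso
      have ha0 : a0 m ∈ closure {a0 m, a1 m} := subset_closure (Or.inl rfl)
      have : a2 m ∈ closure {a0 m, a1 m} := by
        have := mul_mem ha0 h01
        rwa [← mul_assoc, a0_sq, one_mul] at this
      exact absurd (H01_le_stabA m this) (a2_not_mem_stabA hm)
  · exact le_inf (closure_mono (by simp)) (closure_mono (by simp))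

-- C9 : ⟨a0,a2⟩ ⊓ ⟨a1,a2⟩ = ⟨a2⟩
lemma C9 (hm : 3 ≤ m) :
    closure {a0 m, a2 m} ⊓ closure {a1 m, a2 m} = closure {a2 m} := by
  apply le_antisymm
  · rintro h ⟨h02, h12⟩
    rcases klein_form (a0_sq m) (a2_sq m) a0a2_comm h02 with rfl | rfl | rfl | rfl
    · exact one_mem _
    · have := H12_fixes_none m h12; simp at this
    · exact subset_closure rfl
    · have := H12_fixes_none m h12
      rw [Equiv.Perm.mul_apply] at this; simp at this
  · exact le_inf (closure_mono (by simp)) (closure_mono (by simp))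


theorem isRep (m : ℕ) (hm : 3 ≤ m) : IsStringCGroupRep ![a0 m, a1 m, a2 m] := by
  have r0 : ![a0 m, a1 m, a2 m] 0 = a0 m := rfl
  have r1 : ![a0 m, a1 m, a2 m] 1 = a1 m := rfl
  have r2 : ![a0 m, a1 m, a2 m] 2 = a2 m := rfl
  have hrange : Set.range ![a0 m, a1 m, a2 m] = {a0 m, a1 m, a2 m} := by
    ext g
    constructor
    · rintro ⟨i, rfl⟩
      fin_cases i <;> simp
    · rintro (rfl | rfl | rfl)
      exacts [⟨0, rfl⟩, ⟨1, rfl⟩, ⟨2, rfl⟩]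
  haveI : Fact (Nat.Prime 2) := ⟨Nat.prime_two⟩
  refine ⟨?_, ?_, ?_, ?_⟩
  · intro i
    fin_cases i
    · exact orderOf_eq_prime (by rw [pow_two]; exact a0_sq m) a0_ne_one
    · exact orderOf_eq_prime (by rw [pow_two]; exact a1_sq m) (a1_ne_one hm)
    · exact orderOf_eq_prime (by rw [pow_two]; exact a2_sq m) (a2_ne_one hm)
  · rw [hrange]
    exact closure_eq_top hm
  · intro i j hij
    fin_cases i <;> fin_cases j <;> simp only [Fin.val] at hij <;>
      first
        | omega
        | (show Commute (a0 m) (a2 m); exact a0a2_comm)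
  · exact rank3_intersection ![a0 m, a1 m, a2 m]
      (by rw [hrange]; exact closure_eq_top hm)
      (by rw [r0, r1]; exact C1 hm)
      (by rw [r0, r2]; exact C2 hm)
      (by rw [r1, r2]; exact C3 hm)
      (by rw [r0, r1, r2]; exact C4 hm)
      (by rw [r0, r1, r2]; exact C5 hm)
      (by rw [r0, r1, r2]; exact C6 hm)
      (by rw [r0, r1, r2]; exact C7 hm)
      (by rw [r0, r1, r2]; exact C8 hm)
      (by rw [r0, r1, r2]; exact C9 hm)

end SCGAux

/-- Every symmetric group `S_n` with `n ≥ 4` has a string C-group representation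
of rank three. -/
theorem symmetricGroup_exists_rank_three (n : ℕ) (hn : 4 ≤ n) :
    ∃ ρ : Fin 3 → Equiv.Perm (Fin n), IsStringCGroupRep ρ := by
  have hm : 3 ≤ n - 1 := by omega
  haveI : NeZero (n - 1) := ⟨by omega⟩
  have hcard : Fintype.card (SCGAux.Pt (n - 1)) = Fintype.card (Fin n) := by
    rw [Fintype.card_option, ZMod.card, Fintype.card_fin]
    omega
  exact ⟨_, isStringCGroupRep_map (SCGAux.isRep (n - 1) hm)
    (permMulEquiv (Fintype.equivOfCardEq hcard))⟩
end

section
/- Let G be a finite group having no non-trivial cyclic normal subgroup (every normal subgroup of G that is cyclic is trivial). Suppose ρ_0, ρ_1, ρ_2 are elements of G such that each ρ_i has order 2, the product ρ_0ρ_2 has order 2, and G is generated by {ρ_0, ρ_1, ρ_2}. Then (G; (ρ_0, ρ_1, ρ_2)) satisfies the intersection property, and hence is a string C-group representation of rank 3 of G. -/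
open Subgroup

section Aux
variable {G : Type*} [Group G]

lemma aux_zpow_invol {t : G} (ht : t * t = 1) (k : ℤ) : t ^ k = 1 ∨ t ^ k = t := by
  have h2 : t ^ (2 : ℤ) = 1 := by
    rw [show (2:ℤ) = 1 + 1 by norm_num, zpow_add, zpow_one, ht]
  rcases Int.even_or_odd k with ⟨m, hm⟩ | ⟨m, hm⟩
  · left
    rw [hm, show m + m = 2 * m by ring, zpow_mul, h2, one_zpow]
  · right
    rw [hm, zpow_add, zpow_one, zpow_mul, h2, one_zpow, one_mul]

lemma aux_conj_zpow {g t : G} (hg : g⁻¹ = g) (h : g * t * g = t⁻¹) (k : ℤ) :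
    g * t ^ k * g = t ^ (-k) := by
  have h' : g * t * g⁻¹ = t⁻¹ := by rw [hg]; exact h
  calc g * t ^ k * g = g * t ^ k * g⁻¹ := by rw [hg]
    _ = (g * t * g⁻¹) ^ k := conj_zpow.symm
    _ = t ^ (-k) := by rw [h', inv_zpow, zpow_neg]

/-- Elements of a dihedral-type subgroup generated by two involutions. -/
lemma aux_dih {ρa ρb : G} (ha : ρa * ρa = 1) (hb : ρb * ρb = 1) {x : G}
    (hx : x ∈ Subgroup.closure ({ρa, ρb} : Set G)) :
    ∃ k : ℤ, x = (ρa * ρb) ^ k ∨ x = (ρa * ρb) ^ k * ρb := by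
  have ia : ρa⁻¹ = ρa := inv_eq_of_mul_eq_one_right ha
  have ib : ρb⁻¹ = ρb := inv_eq_of_mul_eq_one_right hb
  set r := ρa * ρb with hr
  have hcr : ρb * r * ρb = r⁻¹ := by
    rw [hr, mul_inv_rev, ia, ib]
    calc ρb * (ρa * ρb) * ρb = ρb * ρa * (ρb * ρb) := by group
      _ = ρb * ρa := by rw [hb, mul_one]
  have hk : ∀ k : ℤ, ρb * r ^ k * ρb = r ^ (-k) := aux_conj_zpow ib hcr
  have hbr : ∀ j : ℤ, ρb * r ^ j = r ^ (-j) * ρb := by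
    intro j
    calc ρb * r ^ j = ρb * r ^ j * ρb * ρb := by rw [mul_assoc, hb, mul_one]
      _ = r ^ (-j) * ρb := by rw [hk]
  refine closure_induction ?_ ?_ ?_ ?_ hx
  · rintro y hy
    rcases hy with rfl | rfl
    · exact ⟨1, Or.inr (by rw [zpow_one, hr, mul_assoc, hb, mul_one])⟩
    · exact ⟨0, Or.inr (by rw [zpow_zero, one_mul])⟩
  · exact ⟨0, Or.inl (zpow_zero r).symm⟩
  · rintro y z hy hz ⟨k, hk1 | hk1⟩ ⟨j, hj1 | hj1⟩
    · exact ⟨k + j, Or.inl (by rw [hk1, hj1, zpow_add])⟩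
    · refine ⟨k + j, Or.inr ?_⟩
      rw [hk1, hj1, ← mul_assoc, ← zpow_add]
    · refine ⟨k - j, Or.inr ?_⟩
      calc y * z = r ^ k * (ρb * r ^ j) := by rw [hk1, hj1]; group
        _ = r ^ k * (r ^ (-j) * ρb) := by rw [hbr]
        _ = r ^ k * r ^ (-j) * ρb := by group
        _ = r ^ (k - j) * ρb := by rw [← zpow_add, ← sub_eq_add_neg]
    · refine ⟨k - j, Or.inl ?_⟩
      calc y * z = r ^ k * (ρb * r ^ j) * ρb := by rw [hk1, hj1]; group
        _ = r ^ k * (r ^ (-j) * ρb) * ρb := by rw [hbr]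
        _ = r ^ k * r ^ (-j) * (ρb * ρb) := by group
        _ = r ^ (k - j) := by rw [hb, mul_one, ← zpow_add, ← sub_eq_add_neg]
  · rintro y hy ⟨k, hk1 | hk1⟩
    · exact ⟨-k, Or.inl (by rw [hk1, zpow_neg])⟩
    · refine ⟨k, Or.inr ?_⟩
      calc y⁻¹ = ρb * r ^ (-k) := by rw [hk1, mul_inv_rev, ib, zpow_neg]
        _ = r ^ k * ρb := by rw [hbr, neg_neg]

lemma aux_isCyclic_zpowers (a : G) : IsCyclic (zpowers a) := by
  refine ⟨⟨⟨a, mem_zpowers a⟩, ?_⟩⟩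
  rintro ⟨x, k, rfl⟩
  exact ⟨k, by ext; simp⟩

lemma aux_triv (hG : ∀ H : Subgroup G, H.Normal → IsCyclic H → H = ⊥)
    {ρ₀ ρ₁ ρ₂ a : G} (hgen : Subgroup.closure {ρ₀, ρ₁, ρ₂} = ⊤)
    (h0 : ρ₀ * a * ρ₀⁻¹ ∈ zpowers a) (h0' : ρ₀⁻¹ * a * ρ₀ ∈ zpowers a)
    (h1 : ρ₁ * a * ρ₁⁻¹ ∈ zpowers a) (h1' : ρ₁⁻¹ * a * ρ₁ ∈ zpowers a)
    (h2 : ρ₂ * a * ρ₂⁻¹ ∈ zpowers a) (h2' : ρ₂⁻¹ * a * ρ₂ ∈ zpowers a) :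
    a = 1 := by
  have key : ∀ g : G, g ∈ Subgroup.closure ({ρ₀, ρ₁, ρ₂} : Set G) →
      (∀ n ∈ zpowers a, g * n * g⁻¹ ∈ zpowers a) ∧
      (∀ n ∈ zpowers a, g⁻¹ * n * g ∈ zpowers a) := by
    have base : ∀ g : G, g * a * g⁻¹ ∈ zpowers a → ∀ n ∈ zpowers a,
        g * n * g⁻¹ ∈ zpowers a := by
      rintro g hg n ⟨k, rfl⟩
      obtain ⟨m, hm⟩ := hg
      refine ⟨m * k, ?_⟩
      have : g * (fun k : ℤ => a ^ k) k * g⁻¹ = (g * a * g⁻¹) ^ k := by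
        simp [conj_zpow]
      simp only [this, ← hm]
      rw [← zpow_mul]
    intro g hg
    refine closure_induction ?_ ?_ ?_ ?_ hg
    · rintro x hx
      simp only [Set.mem_insert_iff, Set.mem_singleton_iff] at hx
      rcases hx with rfl | rfl | rfl
      · exact ⟨base _ h0, fun n hn => by simpa using base x⁻¹ (by simpa using h0') n hn⟩
      · exact ⟨base _ h1, fun n hn => by simpa using base x⁻¹ (by simpa using h1') n hn⟩
      · exact ⟨base _ h2, fun n hn => by simpa using base x⁻¹ (by simpa using h2') n hn⟩
    · simp
    · rintro x y hx hy ⟨px, px'⟩ ⟨py, py'⟩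
      constructor
      · intro n hn
        have := px _ (py n hn)
        simpa [mul_assoc] using this
      · intro n hn
        have := py' _ (px' n hn)
        simpa [mul_assoc] using this
    · rintro x hx ⟨px, px'⟩
      exact ⟨fun n hn => by simpa using px' n hn, fun n hn => by simpa using px n hn⟩
  have hnormal : (zpowers a).Normal := by
    constructor
    intro n hn g
    exact (key g (by rw [hgen]; trivial)).1 n hn
  have hbot := hG _ hnormal (aux_isCyclic_zpowers a)
  have ha : a ∈ zpowers a := mem_zpowers a
  rw [hbot] at ha
  simpa using ha

/-- Convenience wrapper for `aux_triv` with self-inverse generators. -/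
lemma aux_triv' (hG : ∀ H : Subgroup G, H.Normal → IsCyclic H → H = ⊥)
    {ρa ρm ρb a : G} (hgen : Subgroup.closure {ρa, ρm, ρb} = ⊤)
    (ea : ρa * ρa = 1) (em : ρm * ρm = 1) (eb : ρb * ρb = 1)
    (k0 : ρa * a * ρa ∈ zpowers a) (k1 : ρm * a * ρm ∈ zpowers a)
    (k2 : ρb * a * ρb ∈ zpowers a) : a = 1 := by
  have ia : ρa⁻¹ = ρa := inv_eq_of_mul_eq_one_right ea
  have im : ρm⁻¹ = ρm := inv_eq_of_mul_eq_one_right em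
  have ib : ρb⁻¹ = ρb := inv_eq_of_mul_eq_one_right eb
  exact aux_triv hG hgen (by rwa [ia]) (by rwa [ia]) (by rwa [im]) (by rwa [im])
    (by rwa [ib]) (by rwa [ib])

end Aux

section Aux2
variable {G : Type*} [Group G]

lemma aux_mem_of_eq_self {x g : G} (h : g * x * g = x) : g * x * g ∈ zpowers x := by
  rw [h]; exact mem_zpowers x

lemma aux_mem_of_eq_inv {x g : G} (h : g * x * g = x⁻¹) : g * x * g ∈ zpowers x := by
  rw [h]; exact ⟨-1, by simp⟩

/-- The basic inversion fact in a dihedral pair. -/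
lemma aux_cr {ρa ρm : G} (ea : ρa * ρa = 1) (em : ρm * ρm = 1) :
    ρm * (ρa * ρm) * ρm = (ρa * ρm)⁻¹ := by
  have ia : ρa⁻¹ = ρa := inv_eq_of_mul_eq_one_right ea
  have im : ρm⁻¹ = ρm := inv_eq_of_mul_eq_one_right em
  rw [mul_inv_rev, ia, im]
  calc ρm * (ρa * ρm) * ρm = ρm * ρa * (ρm * ρm) := by group
    _ = ρm * ρa := by rw [em, mul_one]

lemma aux_cr' {ρa ρm : G} (ea : ρa * ρa = 1) (em : ρm * ρm = 1) :
    ρa * (ρa * ρm) * ρa = (ρa * ρm)⁻¹ := by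
  have ia : ρa⁻¹ = ρa := inv_eq_of_mul_eq_one_right ea
  have im : ρm⁻¹ = ρm := inv_eq_of_mul_eq_one_right em
  rw [mul_inv_rev, ia, im]
  calc ρa * (ρa * ρm) * ρa = (ρa * ρa) * (ρm * ρa) := by group
    _ = ρm * ρa := by rw [ea, one_mul]

lemma aux_caseA (hG : ∀ H : Subgroup G, H.Normal → IsCyclic H → H = ⊥)
    {ρa ρm ρb x : G} (hgen : Subgroup.closure {ρa, ρm, ρb} = ⊤)
    (ea : ρa * ρa = 1) (em : ρm * ρm = 1) (eb : ρb * ρb = 1)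
    {k j : ℤ} (hxr : x = (ρa * ρm) ^ k) (hxu : x = (ρb * ρm) ^ j) : x = 1 := by
  have ia : ρa⁻¹ = ρa := inv_eq_of_mul_eq_one_right ea
  have im : ρm⁻¹ = ρm := inv_eq_of_mul_eq_one_right em
  have ib : ρb⁻¹ = ρb := inv_eq_of_mul_eq_one_right eb
  refine aux_triv' hG hgen ea em eb (aux_mem_of_eq_inv ?_) (aux_mem_of_eq_inv ?_)
    (aux_mem_of_eq_inv ?_)
  · rw [hxr, aux_conj_zpow ia (aux_cr' ea em), zpow_neg]
  · rw [hxr, aux_conj_zpow im (aux_cr ea em), zpow_neg]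
  · rw [hxu, aux_conj_zpow ib (aux_cr' eb em), zpow_neg]

lemma aux_caseB (hG : ∀ H : Subgroup G, H.Normal → IsCyclic H → H = ⊥)
    {ρa ρm ρb x : G} (hgen : Subgroup.closure {ρa, ρm, ρb} = ⊤)
    (ea : ρa * ρa = 1) (em : ρm * ρm = 1) (eb : ρb * ρb = 1)
    (hcom : ρa * ρb = ρb * ρa)
    {k j : ℤ} (hxr : x = (ρa * ρm) ^ k) (hxu : x = (ρb * ρm) ^ j * ρm) : x = 1 := by
  have ia : ρa⁻¹ = ρa := inv_eq_of_mul_eq_one_right ea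
  have im : ρm⁻¹ = ρm := inv_eq_of_mul_eq_one_right em
  have ib : ρb⁻¹ = ρb := inv_eq_of_mul_eq_one_right eb
  set r := ρa * ρm with hr
  set u := ρb * ρm with hu
  have cra : ∀ i : ℤ, ρa * r ^ i * ρa = r ^ (-i) := aux_conj_zpow ia (aux_cr' ea em)
  have crm : ∀ i : ℤ, ρm * r ^ i * ρm = r ^ (-i) := aux_conj_zpow im (aux_cr ea em)
  have cub : ∀ i : ℤ, ρb * u ^ i * ρb = u ^ (-i) := aux_conj_zpow ib (aux_cr' eb em)
  have cum : ∀ i : ℤ, ρm * u ^ i * ρm = u ^ (-i) := aux_conj_zpow im (aux_cr eb em)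
  have hxm : ρm * x * ρm = x⁻¹ := by rw [hxr, crm, zpow_neg]
  have hb : x * ρm = u ^ j := by rw [hxu, mul_assoc, em, mul_one]
  have hxinv : x⁻¹ = x := by
    have h1 : ρm * (x * ρm) * ρm = (x * ρm)⁻¹ := by rw [hb, cum, zpow_neg]
    have h2 : ρm * (x * ρm) * ρm = ρm * x := by
      calc ρm * (x * ρm) * ρm = ρm * x * (ρm * ρm) := by group
        _ = ρm * x := by rw [em, mul_one]
    have h3 : (x * ρm)⁻¹ = ρm * x⁻¹ := by rw [mul_inv_rev, im]
    exact (mul_left_cancel (h2.symm.trans (h1.trans h3))).symm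
  have hxa : ρa * x * ρa = x := by
    have hxinv' := hxinv
    rw [hxr] at hxinv'
    rw [hxr, cra, zpow_neg, hxinv']
  have hxm' : ρm * x * ρm = x := by rw [hxm, hxinv]
  have hxx : x * x = 1 := by nth_rewrite 1 [← hxinv]; exact inv_mul_cancel x
  have hjj : u ^ (-j) = u ^ j := by
    have h2 : u ^ j * u ^ j = 1 := by
      rw [← hb]
      calc x * ρm * (x * ρm) = x * (ρm * x * ρm) := by group
        _ = x * x := by rw [hxm']
        _ = 1 := hxx
    rw [zpow_neg]; exact inv_eq_of_mul_eq_one_right h2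
  have hmb : ρb * ρm * ρb = u ^ (2 : ℤ) * ρm := by
    rw [show u ^ (2:ℤ) = u * u from by
      rw [show (2:ℤ) = 1 + 1 from by norm_num, zpow_add, zpow_one], hu]
    calc ρb * ρm * ρb = ρb * ρm * (ρb * (ρm * ρm)) := by rw [em, mul_one]
      _ = ρb * ρm * (ρb * ρm) * ρm := by group
  have hxb : ρb * x * ρb = u ^ (2 : ℤ) * x := by
    have key : (ρb * u ^ j * ρb) * (ρb * ρm * ρb) = ρb * (u ^ j * ρm) * ρb := by
      calc (ρb * u ^ j * ρb) * (ρb * ρm * ρb) = ρb * u ^ j * (ρb * ρb) * ρm * ρb := by group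
        _ = ρb * u ^ j * 1 * ρm * ρb := by rw [eb]
        _ = ρb * (u ^ j * ρm) * ρb := by group
    calc ρb * x * ρb = ρb * (u ^ j * ρm) * ρb := by rw [hxu]
      _ = (ρb * u ^ j * ρb) * (ρb * ρm * ρb) := key.symm
      _ = u ^ (-j) * (u ^ (2:ℤ) * ρm) := by rw [cub, hmb]
      _ = u ^ (2:ℤ) * (u ^ j * ρm) := by
          rw [hjj, ← mul_assoc, ← mul_assoc, ← zpow_add, ← zpow_add, add_comm]
      _ = u ^ (2:ℤ) * x := by rw [← hxu]
  have hcomx : ρa * x = x * ρa := by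
    calc ρa * x = ρa * x * (ρa * ρa) := by rw [ea, mul_one]
      _ = (ρa * x * ρa) * ρa := by group
      _ = x * ρa := by rw [hxa]
  have h1 : ρa * (ρb * x * ρb) * ρa = ρb * (ρa * x * ρa) * ρb := by
    calc ρa * (ρb * x * ρb) * ρa = (ρa * ρb) * x * (ρb * ρa) := by group
      _ = (ρa * ρb) * x * (ρa * ρb) := by rw [← hcom]
      _ = (ρb * ρa) * x * (ρa * ρb) := by rw [hcom]
      _ = ρb * (ρa * x * ρa) * ρb := by group
  rw [hxa, hxb] at h1
  have h3 : (ρa * u ^ (2:ℤ) * ρa) * x = u ^ (2:ℤ) * x := by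
    calc (ρa * u ^ (2:ℤ) * ρa) * x = ρa * u ^ (2:ℤ) * (ρa * x) := by group
      _ = ρa * u ^ (2:ℤ) * (x * ρa) := by rw [hcomx]
      _ = ρa * (u ^ (2:ℤ) * x) * ρa := by group
      _ = u ^ (2:ℤ) * x := h1
  have hcent := mul_right_cancel h3
  have hu2 : u ^ (2:ℤ) = 1 :=
    aux_triv' hG hgen ea em eb (aux_mem_of_eq_self hcent)
      (aux_mem_of_eq_inv (by rw [cum, zpow_neg])) (aux_mem_of_eq_inv (by rw [cub, zpow_neg]))
  have hxb' : ρb * x * ρb = x := by rw [hxb, hu2, one_mul]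
  exact aux_triv' hG hgen ea em eb (aux_mem_of_eq_self hxa) (aux_mem_of_eq_self hxm')
    (aux_mem_of_eq_self hxb')

/-- If the third involution lies in the dihedral group of the first two, the
first two coincide. -/
lemma aux_notmem (hG : ∀ H : Subgroup G, H.Normal → IsCyclic H → H = ⊥)
    {ρa ρm ρb : G} (hgen : Subgroup.closure {ρa, ρm, ρb} = ⊤)
    (ea : ρa * ρa = 1) (em : ρm * ρm = 1) (eb : ρb * ρb = 1)
    (hmem : ρb ∈ Subgroup.closure ({ρa, ρm} : Set G)) : ρa = ρm := by
  have ia : ρa⁻¹ = ρa := inv_eq_of_mul_eq_one_right ea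
  have im : ρm⁻¹ = ρm := inv_eq_of_mul_eq_one_right em
  have ib : ρb⁻¹ = ρb := inv_eq_of_mul_eq_one_right eb
  set r := ρa * ρm with hr
  have cm1 : ρm * r * ρm⁻¹ = r⁻¹ := by rw [im]; exact aux_cr ea em
  have hr1 : r = 1 := by
    refine aux_triv' hG hgen ea em eb (aux_mem_of_eq_inv (aux_cr' ea em))
      (aux_mem_of_eq_inv (aux_cr ea em)) ?_
    obtain ⟨k, hk | hk⟩ := aux_dih ea em hmem
    · rw [← hr] at hk
      refine aux_mem_of_eq_self ?_
      calc ρb * r * ρb = ρb * r * ρb⁻¹ := by rw [ib]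
        _ = r ^ k * r * (r ^ k)⁻¹ := by rw [hk]
        _ = r := by group
    · rw [← hr] at hk
      refine aux_mem_of_eq_inv ?_
      calc ρb * r * ρb = ρb * r * ρb⁻¹ := by rw [ib]
        _ = (r ^ k * ρm) * r * (r ^ k * ρm)⁻¹ := by rw [hk]
        _ = r ^ k * (ρm * r * ρm⁻¹) * (r ^ k)⁻¹ := by group
        _ = r ^ k * r⁻¹ * (r ^ k)⁻¹ := by rw [cm1]
        _ = r⁻¹ := by group
  have : ρa = ρm⁻¹ := eq_inv_of_mul_eq_one_left hr1
  rw [this, im]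

end Aux2

section Aux3
variable {G : Type*} [Group G]

lemma aux_klein {ρ₀ ρ₂ : G} (e0 : ρ₀ * ρ₀ = 1) (e2 : ρ₂ * ρ₂ = 1)
    (e02 : (ρ₀ * ρ₂) * (ρ₀ * ρ₂) = 1) {x : G}
    (hx : x ∈ Subgroup.closure ({ρ₀, ρ₂} : Set G)) :
    x = 1 ∨ x = ρ₀ ∨ x = ρ₂ ∨ x = ρ₀ * ρ₂ := by
  obtain ⟨k, hk | hk⟩ := aux_dih e0 e2 hx
  · rcases aux_zpow_invol e02 k with h | h
    · left; rw [hk, h]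
    · right; right; right; rw [hk, h]
  · rcases aux_zpow_invol e02 k with h | h
    · right; right; left; rw [hk, h, one_mul]
    · right; left; rw [hk, h, mul_assoc, e2, mul_one]

lemma aux_single {a x : G} (ha : a * a = 1)
    (hx : x ∈ Subgroup.closure ({a} : Set G)) : x = 1 ∨ x = a := by
  rw [← Subgroup.zpowers_eq_closure] at hx
  obtain ⟨k, hk⟩ := mem_zpowers_iff.mp hx
  rcases aux_zpow_invol ha k with h | h
  · left; rw [← hk, h]
  · right; rw [← hk, h]

lemma aux_hard (hG : ∀ H : Subgroup G, H.Normal → IsCyclic H → H = ⊥)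
    {ρ₀ ρ₁ ρ₂ : G} (hgen : Subgroup.closure {ρ₀, ρ₁, ρ₂} = ⊤)
    (e0 : ρ₀ * ρ₀ = 1) (e1 : ρ₁ * ρ₁ = 1) (e2 : ρ₂ * ρ₂ = 1)
    (hcom : ρ₀ * ρ₂ = ρ₂ * ρ₀) {x : G}
    (hx1 : x ∈ Subgroup.closure ({ρ₀, ρ₁} : Set G))
    (hx2 : x ∈ Subgroup.closure ({ρ₁, ρ₂} : Set G)) : x = 1 ∨ x = ρ₁ := by
  have i1 : ρ₁⁻¹ = ρ₁ := inv_eq_of_mul_eq_one_right e1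
  have hgen' : Subgroup.closure ({ρ₂, ρ₁, ρ₀} : Set G) = ⊤ := by
    rw [show ({ρ₂, ρ₁, ρ₀} : Set G) = {ρ₀, ρ₁, ρ₂} from by ext y; simp; tauto]
    exact hgen
  rw [Set.pair_comm ρ₁ ρ₂] at hx2
  obtain ⟨k, hk | hk⟩ := aux_dih e0 e1 hx1 <;>
    obtain ⟨j, hj | hj⟩ := aux_dih e2 e1 hx2
  · exact Or.inl (aux_caseA hG hgen e0 e1 e2 hk hj)
  · exact Or.inl (aux_caseB hG hgen e0 e1 e2 hcom hk hj)
  · exact Or.inl (aux_caseB hG hgen' e2 e1 e0 hcom.symm hj hk)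
  · have hy1 : x * ρ₁ = (ρ₀ * ρ₁) ^ k := by rw [hk, mul_assoc, e1, mul_one]
    have hy2 : x * ρ₁ = (ρ₂ * ρ₁) ^ j := by rw [hj, mul_assoc, e1, mul_one]
    have h1 := aux_caseA hG hgen e0 e1 e2 hy1 hy2
    right
    have : x = ρ₁⁻¹ := eq_inv_of_mul_eq_one_left h1
    rw [this, i1]

end Aux3

set_option maxHeartbeats 2000000 in
/-- If a finite group `G` with no non-trivial cyclic normal subgroup is generated
by involutions `ρ₀, ρ₁, ρ₂` with `ρ₀ρ₂` of order two, then `(G; (ρ₀, ρ₁, ρ₂))`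
satisfies the intersection property, hence is a string C-group representation of
rank three. -/
theorem intersection_property_of_no_cyclic_normal (G : Type*) [Group G] [Finite G]
    (hG : ∀ H : Subgroup G, H.Normal → IsCyclic H → H = ⊥)
    (ρ₀ ρ₁ ρ₂ : G) (h₀ : orderOf ρ₀ = 2) (h₁ : orderOf ρ₁ = 2) (h₂ : orderOf ρ₂ = 2)
    (h₀₂ : orderOf (ρ₀ * ρ₂) = 2)
    (hgen : Subgroup.closure {ρ₀, ρ₁, ρ₂} = ⊤) :
    (∀ I J : Set (Fin 3),
      Subgroup.closure (![ρ₀, ρ₁, ρ₂] '' I) ⊓ Subgroup.closure (![ρ₀, ρ₁, ρ₂] '' J) =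
        Subgroup.closure (![ρ₀, ρ₁, ρ₂] '' (I ∩ J))) ∧
    IsStringCGroupRep ![ρ₀, ρ₁, ρ₂] := by
  classical
  have e0 : ρ₀ * ρ₀ = 1 := by have := pow_orderOf_eq_one ρ₀; rwa [h₀, pow_two] at this
  have e1 : ρ₁ * ρ₁ = 1 := by have := pow_orderOf_eq_one ρ₁; rwa [h₁, pow_two] at this
  have e2 : ρ₂ * ρ₂ = 1 := by have := pow_orderOf_eq_one ρ₂; rwa [h₂, pow_two] at this
  have e02 : (ρ₀ * ρ₂) * (ρ₀ * ρ₂) = 1 := by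
    have := pow_orderOf_eq_one (ρ₀ * ρ₂); rwa [h₀₂, pow_two] at this
  have n0 : ρ₀ ≠ 1 := by intro h; rw [h] at h₀; simp at h₀
  have n1 : ρ₁ ≠ 1 := by intro h; rw [h] at h₁; simp at h₁
  have n2 : ρ₂ ≠ 1 := by intro h; rw [h] at h₂; simp at h₂
  have n02 : ρ₀ * ρ₂ ≠ 1 := by intro h; rw [h] at h₀₂; simp at h₀₂
  have i0 : ρ₀⁻¹ = ρ₀ := inv_eq_of_mul_eq_one_right e0
  have i1 : ρ₁⁻¹ = ρ₁ := inv_eq_of_mul_eq_one_right e1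
  have i2 : ρ₂⁻¹ = ρ₂ := inv_eq_of_mul_eq_one_right e2
  have hcom : ρ₀ * ρ₂ = ρ₂ * ρ₀ := by
    have hinv : (ρ₀ * ρ₂)⁻¹ = ρ₀ * ρ₂ := inv_eq_of_mul_eq_one_right e02
    calc ρ₀ * ρ₂ = (ρ₀ * ρ₂)⁻¹ := hinv.symm
      _ = ρ₂⁻¹ * ρ₀⁻¹ := mul_inv_rev _ _
      _ = ρ₂ * ρ₀ := by rw [i0, i2]
  have c20 : ρ₂ * ρ₀ * ρ₂ = ρ₀ := by
    calc ρ₂ * ρ₀ * ρ₂ = ρ₂ * (ρ₀ * ρ₂) := by group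
      _ = ρ₂ * (ρ₂ * ρ₀) := by rw [hcom]
      _ = (ρ₂ * ρ₂) * ρ₀ := by group
      _ = ρ₀ := by rw [e2, one_mul]
  have c02 : ρ₀ * ρ₂ * ρ₀ = ρ₂ := by
    calc ρ₀ * ρ₂ * ρ₀ = ρ₀ * (ρ₂ * ρ₀) := by group
      _ = ρ₀ * (ρ₀ * ρ₂) := by rw [← hcom]
      _ = (ρ₀ * ρ₀) * ρ₂ := by group
      _ = ρ₂ := by rw [e0, one_mul]
  have hne01 : ρ₀ ≠ ρ₁ := by
    intro h
    apply n0
    refine aux_triv' hG hgen e0 e1 e2 (aux_mem_of_eq_self ?_) (aux_mem_of_eq_self ?_)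
      (aux_mem_of_eq_self c20)
    · rw [e0, one_mul]
    · rw [← h, e0, one_mul]
  have hne12 : ρ₁ ≠ ρ₂ := by
    intro h
    apply n2
    refine aux_triv' hG hgen e0 e1 e2 (aux_mem_of_eq_self c02) (aux_mem_of_eq_self ?_)
      (aux_mem_of_eq_self ?_)
    · rw [h, e2, one_mul]
    · rw [e2, one_mul]
  have hne02 : ρ₀ ≠ ρ₂ := fun h => n02 (by rw [h, e2])
  have hne102 : ρ₁ ≠ ρ₀ * ρ₂ := by
    intro h
    apply n0
    refine aux_triv' hG hgen e0 e1 e2 (aux_mem_of_eq_self ?_) (aux_mem_of_eq_self ?_)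
      (aux_mem_of_eq_self c20)
    · rw [e0, one_mul]
    · rw [h]
      calc (ρ₀ * ρ₂) * ρ₀ * (ρ₀ * ρ₂) = ρ₀ * (ρ₂ * (ρ₀ * ρ₀) * ρ₂) := by group
        _ = ρ₀ * (ρ₂ * ρ₂) := by rw [e0, mul_one]
        _ = ρ₀ := by rw [e2, mul_one]
  have hn2mem : ρ₂ ∉ Subgroup.closure ({ρ₀, ρ₁} : Set G) := fun hmem =>
    hne01 (aux_notmem hG hgen e0 e1 e2 hmem)
  have hn0mem : ρ₀ ∉ Subgroup.closure ({ρ₁, ρ₂} : Set G) := by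
    intro hmem
    have hgen' : Subgroup.closure ({ρ₁, ρ₂, ρ₀} : Set G) = ⊤ := by
      rw [show ({ρ₁, ρ₂, ρ₀} : Set G) = {ρ₀, ρ₁, ρ₂} from by ext y; simp; tauto]
      exact hgen
    exact hne12 (aux_notmem hG hgen' e1 e2 e0 hmem)
  -- the nine nontrivial meets
  have m01_12 : Subgroup.closure ({ρ₀, ρ₁} : Set G) ⊓ Subgroup.closure {ρ₁, ρ₂} =
      Subgroup.closure {ρ₁} := by
    apply le_antisymm
    · rintro x ⟨hx1, hx2⟩
      rcases aux_hard hG hgen e0 e1 e2 hcom hx1 hx2 with h | h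
      · rw [h]; exact one_mem _
      · rw [h]; exact subset_closure rfl
    · exact le_inf (Subgroup.closure_mono (by simp)) (Subgroup.closure_mono (by simp))
  have m01_02 : Subgroup.closure ({ρ₀, ρ₁} : Set G) ⊓ Subgroup.closure {ρ₀, ρ₂} =
      Subgroup.closure {ρ₀} := by
    apply le_antisymm
    · rintro x ⟨hx1, hx2⟩
      rcases aux_klein e0 e2 e02 hx2 with h | h | h | h
      · rw [h]; exact one_mem _
      · rw [h]; exact subset_closure rfl
      · exact absurd (h ▸ hx1) hn2mem
      · exfalso
        apply hn2mem
        have h0mem : ρ₀ ∈ Subgroup.closure ({ρ₀, ρ₁} : Set G) := subset_closure (by simp)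
        have : ρ₀ * x ∈ Subgroup.closure ({ρ₀, ρ₁} : Set G) := mul_mem h0mem hx1
        rwa [h, ← mul_assoc, e0, one_mul] at this
    · exact le_inf (Subgroup.closure_mono (by simp)) (Subgroup.closure_mono (by simp))
  have m02_12 : Subgroup.closure ({ρ₀, ρ₂} : Set G) ⊓ Subgroup.closure {ρ₁, ρ₂} =
      Subgroup.closure {ρ₂} := by
    apply le_antisymm
    · rintro x ⟨hx1, hx2⟩
      rcases aux_klein e0 e2 e02 hx1 with h | h | h | h
      · rw [h]; exact one_mem _
      · exact absurd (h ▸ hx2) hn0mem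
      · rw [h]; exact subset_closure rfl
      · exfalso
        apply hn0mem
        have h2mem : ρ₂ ∈ Subgroup.closure ({ρ₁, ρ₂} : Set G) := subset_closure (by simp)
        have : x * ρ₂ ∈ Subgroup.closure ({ρ₁, ρ₂} : Set G) := mul_mem hx2 h2mem
        rwa [h, mul_assoc, e2, mul_one] at this
    · exact le_inf (Subgroup.closure_mono (by simp)) (Subgroup.closure_mono (by simp))
  have m0_1 : Subgroup.closure ({ρ₀} : Set G) ⊓ Subgroup.closure {ρ₁} = ⊥ := by
    rw [eq_bot_iff]
    rintro x ⟨hx1, hx2⟩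
    rcases aux_single e0 hx1 with h | h
    · simp [h]
    · rcases aux_single e1 hx2 with h' | h'
      · simp [h']
      · exact absurd (h.symm.trans h') hne01
  have m0_2 : Subgroup.closure ({ρ₀} : Set G) ⊓ Subgroup.closure {ρ₂} = ⊥ := by
    rw [eq_bot_iff]
    rintro x ⟨hx1, hx2⟩
    rcases aux_single e0 hx1 with h | h
    · simp [h]
    · rcases aux_single e2 hx2 with h' | h'
      · simp [h']
      · exact absurd (h.symm.trans h') hne02
  have m1_2 : Subgroup.closure ({ρ₁} : Set G) ⊓ Subgroup.closure {ρ₂} = ⊥ := by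
    rw [eq_bot_iff]
    rintro x ⟨hx1, hx2⟩
    rcases aux_single e1 hx1 with h | h
    · simp [h]
    · rcases aux_single e2 hx2 with h' | h'
      · simp [h']
      · exact absurd (h.symm.trans h') hne12
  have m0_12 : Subgroup.closure ({ρ₀} : Set G) ⊓ Subgroup.closure {ρ₁, ρ₂} = ⊥ := by
    rw [eq_bot_iff]
    rintro x ⟨hx1, hx2⟩
    rcases aux_single e0 hx1 with h | h
    · simp [h]
    · exact absurd (h ▸ hx2) hn0mem
  have m2_01 : Subgroup.closure ({ρ₂} : Set G) ⊓ Subgroup.closure {ρ₀, ρ₁} = ⊥ := by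
    rw [eq_bot_iff]
    rintro x ⟨hx1, hx2⟩
    rcases aux_single e2 hx1 with h | h
    · simp [h]
    · exact absurd (h ▸ hx2) hn2mem
  have m1_02 : Subgroup.closure ({ρ₁} : Set G) ⊓ Subgroup.closure {ρ₀, ρ₂} = ⊥ := by
    rw [eq_bot_iff]
    rintro x ⟨hx1, hx2⟩
    rcases aux_single e1 hx1 with h | h
    · simp [h]
    · exfalso
      rcases aux_klein e0 e2 e02 (h ▸ hx2) with h' | h' | h' | h'
      · exact n1 h'
      · exact hne01 h'.symm
      · exact hne12 h'
      · exact hne102 h'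
  have himg : ∀ I : Set (Fin 3), ![ρ₀, ρ₁, ρ₂] '' I =
      (if (0 : Fin 3) ∈ I then ({ρ₀} : Set G) else ∅) ∪
        (if (1 : Fin 3) ∈ I then ({ρ₁} : Set G) else ∅) ∪
        (if (2 : Fin 3) ∈ I then ({ρ₂} : Set G) else ∅) := by
    intro I
    ext y
    constructor
    · rintro ⟨i, hi, rfl⟩
      fin_cases i
      · exact Or.inl (Or.inl (by simp [show (0 : Fin 3) ∈ I from hi]))
      · exact Or.inl (Or.inr (by simp [show (1 : Fin 3) ∈ I from hi]))
      · exact Or.inr (by simp [show (2 : Fin 3) ∈ I from hi])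
    · rintro ((hy | hy) | hy)
      · split_ifs at hy with h
        · exact ⟨0, h, by simpa using hy.symm⟩
        · exact absurd hy (Set.notMem_empty y)
      · split_ifs at hy with h
        · exact ⟨1, h, by simpa using hy.symm⟩
        · exact absurd hy (Set.notMem_empty y)
      · split_ifs at hy with h
        · exact ⟨2, h, by simpa using hy.symm⟩
        · exact absurd hy (Set.notMem_empty y)
  have hcl : ∀ I : Set (Fin 3), Subgroup.closure (![ρ₀, ρ₁, ρ₂] '' I) =
      (if (0 : Fin 3) ∈ I then Subgroup.closure ({ρ₀} : Set G) else ⊥) ⊔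
        (if (1 : Fin 3) ∈ I then Subgroup.closure ({ρ₁} : Set G) else ⊥) ⊔
        (if (2 : Fin 3) ∈ I then Subgroup.closure ({ρ₂} : Set G) else ⊥) := by
    intro I
    rw [himg I, Subgroup.closure_union, Subgroup.closure_union,
      apply_ite (Subgroup.closure : Set G → Subgroup G),
      apply_ite (Subgroup.closure : Set G → Subgroup G),
      apply_ite (Subgroup.closure : Set G → Subgroup G), Subgroup.closure_empty]
  have s01 : Subgroup.closure ({ρ₀} : Set G) ⊔ Subgroup.closure {ρ₁} =
      Subgroup.closure {ρ₀, ρ₁} := by rw [← Subgroup.closure_union, Set.singleton_union]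
  have s02 : Subgroup.closure ({ρ₀} : Set G) ⊔ Subgroup.closure {ρ₂} =
      Subgroup.closure {ρ₀, ρ₂} := by rw [← Subgroup.closure_union, Set.singleton_union]
  have s12 : Subgroup.closure ({ρ₁} : Set G) ⊔ Subgroup.closure {ρ₂} =
      Subgroup.closure {ρ₁, ρ₂} := by rw [← Subgroup.closure_union, Set.singleton_union]
  have s012 : Subgroup.closure ({ρ₀, ρ₁} : Set G) ⊔ Subgroup.closure {ρ₂} = ⊤ := by
    rw [← Subgroup.closure_union, Set.union_singleton,
      show insert ρ₂ ({ρ₀, ρ₁} : Set G) = {ρ₀, ρ₁, ρ₂} from by ext y; simp; tauto, hgen]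
  have key : ∀ I J : Set (Fin 3),
      Subgroup.closure (![ρ₀, ρ₁, ρ₂] '' I) ⊓ Subgroup.closure (![ρ₀, ρ₁, ρ₂] '' J) =
        Subgroup.closure (![ρ₀, ρ₁, ρ₂] '' (I ∩ J)) := by
    intro I J
    rw [hcl I, hcl J, hcl (I ∩ J)]
    by_cases h0I : (0 : Fin 3) ∈ I <;> by_cases h1I : (1 : Fin 3) ∈ I <;>
      by_cases h2I : (2 : Fin 3) ∈ I <;> by_cases h0J : (0 : Fin 3) ∈ J <;>
      by_cases h1J : (1 : Fin 3) ∈ J <;> by_cases h2J : (2 : Fin 3) ∈ J <;>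
      simp only [Set.mem_inter_iff, h0I, h1I, h2I, h0J, h1J, h2J, if_true, if_false,
        true_and, false_and, and_true, and_false, and_self, if_neg, not_false_iff,
        sup_bot_eq, bot_sup_eq, s01, s02, s12, s012] <;>
      first
      | rfl
      | (simp <;> exact subset_closure (by simp))
      | exact m01_12 | exact m01_02 | exact m02_12 | exact m0_1 | exact m0_2 | exact m1_2
      | exact m0_12 | exact m2_01 | exact m1_02
      | (rw [inf_comm]
         first
         | exact m01_12 | exact m01_02 | exact m02_12 | exact m0_1 | exact m0_2 | exact m1_2
         | exact m0_12 | exact m2_01 | exact m1_02)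
      | exact inf_eq_left.mpr (Subgroup.closure_mono (by intro y hy; simp at hy ⊢; tauto))
      | exact inf_eq_right.mpr (Subgroup.closure_mono (by intro y hy; simp at hy ⊢; tauto))
  refine ⟨key, ?_, ?_, ?_, key⟩
  · intro i
    fin_cases i
    · simpa using h₀
    · simpa using h₁
    · simpa using h₂
  · have hrange : Set.range ![ρ₀, ρ₁, ρ₂] = {ρ₀, ρ₁, ρ₂} := by
      ext y
      constructor
      · rintro ⟨i, rfl⟩
        fin_cases i <;> simp
      · rintro (rfl | rfl | rfl)
        exacts [⟨0, rfl⟩, ⟨1, rfl⟩, ⟨2, rfl⟩]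
    rw [hrange, hgen]
  · intro i j hij
    fin_cases i <;> fin_cases j <;> simp_all <;> exact hcom
end
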